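/- arXiv:0903.1361 — 8 statements merged into one kernel-verified Lean document; each statement's English description precedes it below -/
import Mathlib

section
/- For probability measures P and Q on the reals, P is stochastically smaller than Q (i.e., P([x,∞)) ≤ Q([x,∞)) for all real x) if and only if there exist real-valued random variables X and Y on a common probability space with distributions P and Q respectively such that X ≤ Y almost surely. -/
open MeasureTheory Set

section Quantile

open ProbabilityTheory Filter Topology

noncomputable def qf (P : Measure ℝ) (t : ℝ) : ℝ := sInf {x | t ≤ cdf P x}

lemma qf_set_nonempty (P : Measure ℝ) {t : ℝ} (ht : t < 1) :
    {x | t ≤ cdf P x}.Nonempty := by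
  obtain ⟨x, hx⟩ := ((tendsto_cdf_atTop P).eventually_const_le ht).exists
  exact ⟨x, hx⟩

lemma qf_set_bddBelow (P : Measure ℝ) {t : ℝ} (ht : 0 < t) :
    BddBelow {x | t ≤ cdf P x} := by
  obtain ⟨y, hy⟩ := ((tendsto_cdf_atBot P).eventually_lt_const ht).exists
  refine ⟨y, fun z hz => ?_⟩
  by_contra h
  push_neg at h
  exact absurd (hz.trans (monotone_cdf P h.le)) (not_le_of_gt hy)

lemma qf_le_iff (P : Measure ℝ) {t : ℝ} (ht : t ∈ Ioo (0:ℝ) 1) (x : ℝ) :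
    qf P t ≤ x ↔ t ≤ cdf P x := by
  constructor
  · intro h
    have h2 : ∀ y, x < y → t ≤ cdf P y := by
      intro y hy
      obtain ⟨z, hz, hzy⟩ := exists_lt_of_csInf_lt (qf_set_nonempty P ht.2)
        (lt_of_le_of_lt h hy)
      exact hz.trans (monotone_cdf P hzy.le)
    have hcont : Tendsto (cdf P) (𝓝[>] x) (𝓝 (cdf P x)) :=
      ((cdf P).right_continuous x).tendsto.mono_left
        (nhdsWithin_mono x Ioi_subset_Ici_self)
    refine ge_of_tendsto hcont ?_
    exact eventually_mem_nhdsWithin.mono fun y hy => h2 y hy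
  · intro h
    exact csInf_le (qf_set_bddBelow P ht.1) h

lemma qf_monotoneOn (P : Measure ℝ) : MonotoneOn (qf P) (Ioo (0:ℝ) 1) := by
  intro s hs t ht hst
  exact csInf_le_csInf (qf_set_bddBelow P hs.1) (qf_set_nonempty P ht.2)
    (fun x hx => le_trans hst hx)

lemma map_qf (P : Measure ℝ) [IsProbabilityMeasure P] :
    (volume.restrict (Ioo (0:ℝ) 1)).map (qf P) = P := by
  have haem : AEMeasurable (qf P) (volume.restrict (Ioo (0:ℝ) 1)) :=
    aemeasurable_restrict_of_monotoneOn measurableSet_Ioo (qf_monotoneOn P)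
  have : IsProbabilityMeasure (volume.restrict (Ioo (0:ℝ) 1)) :=
    ⟨by simp [Real.volume_Ioo]⟩
  refine Measure.ext_of_Iic _ _ fun x => ?_
  rw [Measure.map_apply_of_aemeasurable haem measurableSet_Iic,
    Measure.restrict_apply' measurableSet_Ioo]
  have hset : qf P ⁻¹' Iic x ∩ Ioo 0 1 = Iic (cdf P x) ∩ Ioo 0 1 := by
    ext t
    simp only [mem_inter_iff, mem_preimage, mem_Iic, and_congr_left_iff]
    intro ht
    exact qf_le_iff P ht x
  rw [hset, ← ofReal_cdf]
  have h0 : 0 ≤ cdf P x := cdf_nonneg P x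
  have h1 : cdf P x ≤ 1 := cdf_le_one P x
  rcases lt_or_ge (cdf P x) 1 with hc | hc
  · have : Iic (cdf P x) ∩ Ioo (0:ℝ) 1 = Ioc 0 (cdf P x) := by
      ext t
      simp only [mem_inter_iff, mem_Iic, mem_Ioo, mem_Ioc]
      constructor
      · rintro ⟨h1', h2', _⟩; exact ⟨h2', h1'⟩
      · rintro ⟨h1', h2'⟩; exact ⟨h2', h1', lt_of_le_of_lt h2' hc⟩
    rw [this, Real.volume_Ioc, sub_zero]
  · have hc1 : cdf P x = 1 := le_antisymm h1 hc
    have : Iic (cdf P x) ∩ Ioo (0:ℝ) 1 = Ioo 0 1 := by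
      ext t
      simp only [mem_inter_iff, mem_Iic, mem_Ioo, hc1]
      exact ⟨fun h => h.2, fun h => ⟨h.2.le, h⟩⟩
    rw [this, Real.volume_Ioo, sub_zero, hc1]

lemma cdf_antitone_of_Ici_le (P Q : Measure ℝ) [IsProbabilityMeasure P]
    [IsProbabilityMeasure Q] (h : ∀ x : ℝ, P (Ici x) ≤ Q (Ici x)) (x : ℝ) :
    cdf Q x ≤ cdf P x := by
  have hIoi : P (Ioi x) ≤ Q (Ioi x) := by
    have hU : Ioi x = ⋃ n : ℕ, Ici (x + ((n : ℝ) + 1)⁻¹) := by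
      ext y
      simp only [mem_Ioi, mem_iUnion, mem_Ici]
      constructor
      · intro hy
        obtain ⟨n, hn⟩ := exists_nat_one_div_lt (sub_pos.mpr hy)
        refine ⟨n, ?_⟩
        rw [one_div] at hn
        linarith
      · rintro ⟨n, hn⟩
        have : (0:ℝ) < ((n : ℝ) + 1)⁻¹ := by positivity
        linarith
    have key : ∀ a b : ℕ, a ≤ b → ((b:ℝ)+1)⁻¹ ≤ ((a:ℝ)+1)⁻¹ := by
      intro a b hab
      have : (a:ℝ) + 1 ≤ (b:ℝ) + 1 := by exact_mod_cast Nat.succ_le_succ hab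
      exact inv_anti₀ (by positivity) this
    have hdir : Directed (· ⊆ ·) (fun n : ℕ => Ici (x + ((n : ℝ) + 1)⁻¹)) := by
      intro m n
      exact ⟨max m n, Ici_subset_Ici.mpr (add_le_add_right (key _ _ (le_max_left m n)) x),
        Ici_subset_Ici.mpr (add_le_add_right (key _ _ (le_max_right m n)) x)⟩
    rw [hU, hdir.measure_iUnion, hdir.measure_iUnion]
    exact iSup_le fun n => le_iSup_of_le n (h _)
  have hP : P (Iic x) = 1 - P (Ioi x) := by
    rw [← compl_Ioi, measure_compl measurableSet_Ioi (measure_ne_top P _), measure_univ]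
  have hQ : Q (Iic x) = 1 - Q (Ioi x) := by
    rw [← compl_Ioi, measure_compl measurableSet_Ioi (measure_ne_top Q _), measure_univ]
  rw [cdf_eq_real, cdf_eq_real, measureReal_def, measureReal_def, hP, hQ]
  refine ENNReal.toReal_mono (by simp [hP ▸ (measure_ne_top P _)]) ?_
  · exact tsub_le_tsub_left hIoi 1

end Quantile

theorem stochastic_order_iff_coupling (P Q : Measure ℝ)
    [IsProbabilityMeasure P] [IsProbabilityMeasure Q] :
    (∀ x : ℝ, P (Ici x) ≤ Q (Ici x)) ↔
      ∃ (Ω : Type) (_ : MeasurableSpace Ω) (μ : Measure Ω) (X Y : Ω → ℝ),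
        IsProbabilityMeasure μ ∧ Measurable X ∧ Measurable Y ∧
        μ.map X = P ∧ μ.map Y = Q ∧ ∀ᵐ ω ∂μ, X ω ≤ Y ω := by
  constructor
  · intro h
    set μ : Measure ℝ := volume.restrict (Ioo (0:ℝ) 1) with hμ
    have hprob : IsProbabilityMeasure μ := ⟨by simp [hμ, Real.volume_Ioo]⟩
    have haemP : AEMeasurable (qf P) μ :=
      aemeasurable_restrict_of_monotoneOn measurableSet_Ioo (qf_monotoneOn P)
    have haemQ : AEMeasurable (qf Q) μ :=
      aemeasurable_restrict_of_monotoneOn measurableSet_Ioo (qf_monotoneOn Q)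
    refine ⟨ℝ, inferInstance, μ, haemP.mk _, haemQ.mk _, hprob,
      haemP.measurable_mk, haemQ.measurable_mk, ?_, ?_, ?_⟩
    · rw [← Measure.map_congr haemP.ae_eq_mk]
      exact map_qf P
    · rw [← Measure.map_congr haemQ.ae_eq_mk]
      exact map_qf Q
    · have hcdf := cdf_antitone_of_Ici_le P Q h
      have hle : ∀ᵐ t ∂μ, qf P t ≤ qf Q t := by
        refine (ae_restrict_iff' measurableSet_Ioo).mpr (ae_of_all _ fun t ht => ?_)
        refine csInf_le_csInf (qf_set_bddBelow P ht.1) (qf_set_nonempty Q ht.2)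
          (fun x hx => le_trans hx (hcdf x))
      filter_upwards [hle, haemP.ae_eq_mk, haemQ.ae_eq_mk] with t h1 h2 h3
      rw [← h2, ← h3]
      exact h1
  · rintro ⟨Ω, mΩ, μ, X, Y, hμ, hX, hY, hPX, hPY, hle⟩
    intro x
    rw [← hPX, ← hPY, Measure.map_apply hX measurableSet_Ici,
      Measure.map_apply hY measurableSet_Ici]
    refine measure_mono_ae ?_
    filter_upwards [hle] with ω hω hmem
    exact le_trans hmem hω
end

section
/- Let P and Q be probability measures on ℝ with likelihood ratio ℓ = (dP/dμ)/(dQ/dμ) with respect to a dominating measure μ. Suppose there exists x₀ ∈ ℝ such that ℓ is monotone on (-∞, x₀] and monotone on [x₀, ∞) (each piece either increasing or decreasing), and lim_{x→-∞} ℓ(x) ≥ 1 and lim_{x→∞} ℓ(x) ≤ 1. Then P is stochastically smaller than Q. -/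
open MeasureTheory Set Filter

/-- Half-monotone likelihood ratio with tail conditions implies stochastic order.
`P = f·μ`, `Q = g·μ`, and `ℓ = f/g` (with the `ℝ≥0⊤` convention `a/0 = ⊤` for `a ≠ 0`). -/
theorem half_monotone_likelihood_ratio_implies_st
    (μ : Measure ℝ) (f g : ℝ → ENNReal)
    (P Q : Measure ℝ) [IsProbabilityMeasure P] [IsProbabilityMeasure Q]
    (hP : P = μ.withDensity f) (hQ : Q = μ.withDensity g)
    (ℓ : ℝ → ENNReal) (hℓ : ∀ x, ℓ x = f x / g x)
    (x₀ : ℝ)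
    (hleft : MonotoneOn ℓ (Iic x₀) ∨ AntitoneOn ℓ (Iic x₀))
    (hright : MonotoneOn ℓ (Ici x₀) ∨ AntitoneOn ℓ (Ici x₀))
    (a b : ENNReal)
    (ha : Tendsto ℓ atBot (nhds a)) (ha1 : 1 ≤ a)
    (hb : Tendsto ℓ atTop (nhds b)) (hb1 : b ≤ 1) :
    ∀ x : ℝ, P (Ici x) ≤ Q (Ici x) := by
  -- pointwise conversions between ℓ and f, g
  have hge : ∀ y, 1 ≤ ℓ y → g y ≤ f y := by
    intro y hy
    rw [hℓ y] at hy
    rcases eq_or_ne (g y) 0 with h0 | h0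
    · simp [h0]
    rcases eq_or_ne (g y) ⊤ with ht | ht
    · rw [ht, ENNReal.div_top] at hy; exact absurd hy (by simp)
    · have := (ENNReal.le_div_iff_mul_le (Or.inl h0) (Or.inl ht)).mp hy
      simpa using this
  have hle : ∀ y, ℓ y ≤ 1 → f y ≤ g y := by
    intro y hy
    rw [hℓ y] at hy
    rcases eq_or_ne (g y) 0 with h0 | h0
    · rcases eq_or_ne (f y) 0 with hf0 | hf0
      · simp [hf0]
      · rw [h0, ENNReal.div_zero hf0] at hy
        exact absurd hy (by simp)
    rcases eq_or_ne (g y) ⊤ with ht | ht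
    · simp [ht]
    · have := (ENNReal.div_le_iff h0 ht).mp hy
      simpa using this
  -- behavior on the left half
  have Lleft : ∀ u v, u ≤ v → v ≤ x₀ → 1 ≤ ℓ v → 1 ≤ ℓ u := by
    intro u v huv hvx hv
    rcases hleft with hm | hm
    · have hev : ∀ᶠ t in atBot, ℓ t ≤ ℓ u :=
        eventually_atBot.mpr ⟨u, fun t ht => hm (le_trans ht (huv.trans hvx)) (huv.trans hvx) ht⟩
      exact ha1.trans (le_of_tendsto ha hev)
    · exact hv.trans (hm (huv.trans hvx) hvx huv)
  -- behavior on the right half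
  have Lright : ∀ u v, x₀ ≤ u → u ≤ v → 1 < ℓ v → 1 ≤ ℓ u := by
    intro u v hxu huv hv
    rcases hright with hm | hm
    · have hev : ∀ᶠ t in atTop, ℓ v ≤ ℓ t :=
        eventually_atTop.mpr ⟨v, fun t ht => hm (hxu.trans huv) ((hxu.trans huv).trans ht) ht⟩
      exact absurd ((ge_of_tendsto hb hev).trans hb1) (not_le.mpr hv)
    · exact hv.le.trans (hm hxu (hxu.trans huv) huv)
  -- key: once ℓ drops below 1, it never exceeds 1 again
  have hkey : ∀ u v, u ≤ v → 1 < ℓ v → 1 ≤ ℓ u := by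
    intro u v huv hv
    rcases le_or_gt v x₀ with h | h
    · exact Lleft u v huv h hv.le
    rcases le_or_gt x₀ u with h' | h'
    · exact Lright u v h' huv hv
    · exact Lleft u x₀ h'.le le_rfl (Lright x₀ v le_rfl h.le hv)
  intro x
  by_cases hA : ∀ u < x, 1 ≤ ℓ u
  · -- g ≤ f on Iio x, use complements
    have hQP : Q (Iio x) ≤ P (Iio x) := by
      rw [hP, hQ, withDensity_apply _ measurableSet_Iio,
        withDensity_apply _ measurableSet_Iio]
      exact setLIntegral_mono' measurableSet_Iio fun y hy => hge y (hA y hy)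
    have hPc : P (Ici x) = 1 - P (Iio x) := by
      rw [show Ici x = (Iio x)ᶜ by simp, measure_compl measurableSet_Iio (measure_ne_top _ _),
        measure_univ]
    have hQc : Q (Ici x) = 1 - Q (Iio x) := by
      rw [show Ici x = (Iio x)ᶜ by simp, measure_compl measurableSet_Iio (measure_ne_top _ _),
        measure_univ]
    rw [hPc, hQc]
    exact tsub_le_tsub_left hQP 1
  · -- f ≤ g on Ici x
    push_neg at hA
    obtain ⟨u, hu, hu1⟩ := hA
    have hB : ∀ v, x ≤ v → ℓ v ≤ 1 := by
      intro v hv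
      by_contra hc
      exact absurd (hkey u v (hu.le.trans hv) (not_le.mp hc)) hu1.not_ge
    rw [hP, hQ, withDensity_apply _ measurableSet_Ici, withDensity_apply _ measurableSet_Ici]
    exact setLIntegral_mono' measurableSet_Ici fun y hy => hle y (hB y hy)
end

section
/- For n₁ ≤ n₂ in ℕ and p₁, p₂ ∈ (0,1), if (1-p₁)^{n₁} ≥ (1-p₂)^{n₂}, then the binomial distribution b_{n₁,p₁} is stochastically smaller than b_{n₂,p₂}. -/
/-- The binomial weight `b_{n,p}({k}) = C(n,k) p^k (1-p)^{n-k}`. -/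
noncomputable def binomPMF (n : ℕ) (p : ℝ) (k : ℕ) : ℝ :=
  (n.choose k : ℝ) * p ^ k * (1 - p) ^ (n - k)

lemma binomPMF_nonneg {p : ℝ} (h : p ∈ Set.Ioo (0:ℝ) 1) (n k : ℕ) :
    0 ≤ binomPMF n p k := by
  obtain ⟨h0, h1⟩ := h
  unfold binomPMF
  have : (0:ℝ) < 1 - p := by linarith
  positivity

lemma binomPMF_pos {p : ℝ} (h : p ∈ Set.Ioo (0:ℝ) 1) {n k : ℕ} (hk : k ≤ n) :
    0 < binomPMF n p k := by
  obtain ⟨h0, h1⟩ := h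
  unfold binomPMF
  have hc : 0 < n.choose k := Nat.choose_pos hk
  have : (0:ℝ) < 1 - p := by linarith
  positivity

lemma binomPMF_eq_zero {n k : ℕ} (h : n < k) (p : ℝ) : binomPMF n p k = 0 := by
  unfold binomPMF
  rw [Nat.choose_eq_zero_of_lt h]
  simp

lemma binomPMF_zero (n : ℕ) (p : ℝ) : binomPMF n p 0 = (1 - p) ^ n := by
  unfold binomPMF; simp

lemma binomPMF_sum (n : ℕ) (p : ℝ) :
    ∑ j ∈ Finset.range (n+1), binomPMF n p j = 1 := by
  rw [show (1:ℝ) = (p + (1-p))^n by ring_nf, add_pow]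
  unfold binomPMF
  exact Finset.sum_congr rfl (fun j _ => by ring)

lemma binomPMF_rec {n j : ℕ} (hj : j < n) (p : ℝ) :
    ((j:ℝ)+1) * (1-p) * binomPMF n p (j+1) = ((n:ℝ) - j) * p * binomPMF n p j := by
  have h1 : (n.choose (j+1) : ℝ) * ((j:ℝ)+1) = (n.choose j : ℝ) * ((n:ℝ) - (j:ℝ)) := by
    have h := Nat.choose_succ_right_eq n j
    have h2 : ((n.choose (j+1) * (j+1) : ℕ) : ℝ) = ((n.choose j * (n-j) : ℕ) : ℝ) := by
      exact_mod_cast congrArg (Nat.cast : ℕ → ℝ) h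
    push_cast [Nat.cast_sub hj.le] at h2
    linarith
  unfold binomPMF
  rw [show n - j = (n - (j+1)) + 1 by omega, pow_succ, pow_succ]
  linear_combination (p * (1-p) * p^j * (1-p)^(n-(j+1))) * h1

set_option maxHeartbeats 2000000 in
lemma binom_crossing (n₁ n₂ : ℕ) (p₁ p₂ : ℝ)
    (hn : n₁ ≤ n₂)
    (h₁ : p₁ ∈ Set.Ioo (0:ℝ) 1) (h₂ : p₂ ∈ Set.Ioo (0:ℝ) 1)
    (hL : (1 - p₂) ^ n₂ ≤ (1 - p₁) ^ n₁) :
    ∃ j₀ : ℕ, (∀ j < j₀, binomPMF n₂ p₂ j ≤ binomPMF n₁ p₁ j) ∧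
      (∀ j, j₀ ≤ j → binomPMF n₁ p₁ j ≤ binomPMF n₂ p₂ j) := by
  set f : ℕ → ℝ := binomPMF n₁ p₁ with hf
  set g : ℕ → ℝ := binomPMF n₂ p₂ with hg
  have hfpos : ∀ i, i ≤ n₁ → 0 < f i := fun i hi => binomPMF_pos h₁ hi
  have hgpos : ∀ i, i ≤ n₂ → 0 < g i := fun i hi => binomPMF_pos h₂ hi
  by_cases H : ∃ j, f j < g j
  · have hj₀ : f (Nat.find H) < g (Nat.find H) := Nat.find_spec H
    set j₀ := Nat.find H with hj₀def
    refine ⟨j₀, fun j hj => not_lt.mp (Nat.find_min H hj), ?_⟩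
    intro j hj
    rcases lt_or_ge n₁ j with hjn | hjn
    · rw [hf, binomPMF_eq_zero hjn]
      exact binomPMF_nonneg h₂ _ _
    · -- j ≤ n₁, so j₀ ≤ n₁, ratio argument
      have hj₀n : j₀ ≤ n₁ := le_trans hj hjn
      set r : ℕ → ℝ := fun i => g i / f i with hr
      have hr0 : r 0 ≤ 1 := by
        rw [hr]
        simp only [hf, hg, binomPMF_zero]
        have hp1 : (0:ℝ) < 1 - p₁ := by linarith [h₁.2]
        exact div_le_one_of_le₀ hL (by positivity)
      have hrj₀ : 1 < r j₀ := (one_lt_div (hfpos j₀ hj₀n)).mpr hj₀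
      have hrpos : ∀ i, i ≤ n₁ → 0 < r i :=
        fun i hi => div_pos (hgpos i (le_trans hi hn)) (hfpos i hi)
      -- ratio recurrence
      have hrec : ∀ i, i < n₁ →
          r (i+1) * (((n₁:ℝ) - i) * p₁ * (1 - p₂)) = r i * (((n₂:ℝ) - i) * p₂ * (1 - p₁)) := by
        intro i hi
        have e1 := binomPMF_rec hi p₁
        have e2 := binomPMF_rec (lt_of_lt_of_le hi hn) p₂
        have hf1 := (hfpos i hi.le).ne'
        have hf2 := (hfpos (i+1) hi).ne'
        have hC : ((i:ℝ)+1) * (g (i+1) * f i * (((n₁:ℝ) - i) * p₁ * (1 - p₂)))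
            = ((i:ℝ)+1) * (g i * f (i+1) * (((n₂:ℝ) - i) * p₂ * (1 - p₁))) := by
          linear_combination (f i * (((n₁:ℝ)) - i) * p₁) * e2
            - ((((n₂:ℝ)) - i) * p₂ * g i) * e1
        have hC' := mul_left_cancel₀ (by positivity : (0:ℝ) < (i:ℝ)+1).ne' hC
        rw [hr]
        field_simp
        linear_combination hC'
      -- there is an upward step before j₀
      have hex : ∃ m, m < j₀ ∧ r m < r (m+1) := by
        by_contra hc
        push_neg at hc
        have key : ∀ i, i ≤ j₀ → r i ≤ 1 := by
          intro i hi
          induction i with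
          | zero => exact hr0
          | succ m ih => exact le_trans (hc m (by omega)) (ih (by omega))
        exact absurd (key j₀ le_rfl) (not_le.mpr hrj₀)
      obtain ⟨m, hm, hstep⟩ := hex
      have hmn : m < n₁ := lt_of_lt_of_le hm hj₀n
      have hmnR : (m:ℝ) < (n₁:ℝ) := by exact_mod_cast hmn
      have hX1m : (0:ℝ) < ((n₁:ℝ) - m) * p₁ * (1 - p₂) := by
        exact mul_pos (mul_pos (by linarith) h₁.1) (by linarith [h₂.2])
      have hXm : ((n₁:ℝ) - m) * p₁ * (1 - p₂) < ((n₂:ℝ) - m) * p₂ * (1 - p₁) := by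
        have hid := hrec m hmn
        have hrm := hrpos m hmn.le
        nlinarith [mul_pos (sub_pos.mpr hstep) hX1m]
      -- X monotone in i
      have hX : ∀ i, m ≤ i → i < n₁ →
          ((n₁:ℝ) - i) * p₁ * (1 - p₂) ≤ ((n₂:ℝ) - i) * p₂ * (1 - p₁) := by
        intro i hmi hin
        have c1 : (m:ℝ) ≤ (i:ℝ) := by exact_mod_cast hmi
        have c2 : (i:ℝ) ≤ (n₁:ℝ) := by exact_mod_cast hin.le
        have c3 : (n₁:ℝ) ≤ (n₂:ℝ) := by exact_mod_cast hn
        have hA : (0:ℝ) < p₂ * (1 - p₁) := by nlinarith [h₂.1, h₁.2]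
        have ha : (0:ℝ) ≤ ((i:ℝ) - m) * ((n₂:ℝ) - n₁) * (p₂ * (1 - p₁)) := by
          apply mul_nonneg (mul_nonneg (by linarith) (by linarith)) hA.le
        have hb : (0:ℝ) ≤ ((n₁:ℝ) - i) *
            (((n₂:ℝ) - m) * (p₂ * (1 - p₁)) - ((n₁:ℝ) - m) * (p₁ * (1 - p₂))) := by
          apply mul_nonneg (by linarith)
          nlinarith [hXm]
        nlinarith [ha, hb, hmnR]
      -- r is nondecreasing from j₀ to n₁
      have hmono : ∀ i, j₀ ≤ i → i ≤ n₁ → r j₀ ≤ r i := by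
        intro i hi
        induction i, hi using Nat.le_induction with
        | base => intro _; exact le_rfl
        | succ i hji ih =>
          intro hin
          have hiltn : i < n₁ := by omega
          have hXi := hX i (by omega) hiltn
          have hid := hrec i hiltn
          have hri := hrpos i hiltn.le
          have hX1i : (0:ℝ) < ((n₁:ℝ) - i) * p₁ * (1 - p₂) := by
            have hcast : (i:ℝ) < (n₁:ℝ) := by exact_mod_cast hiltn
            exact mul_pos (mul_pos (by linarith) h₁.1) (by linarith [h₂.2])
          have hstepi : r i ≤ r (i+1) := by
            nlinarith [mul_nonneg hri.le (sub_nonneg.mpr hXi)]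
          exact le_trans (ih (by omega)) hstepi
      have : 1 < r j := lt_of_lt_of_le hrj₀ (hmono j hj hjn)
      exact ((one_lt_div (hfpos j hjn)).mp this).le
  · push_neg at H
    refine ⟨n₂ + 1, fun j _ => H j, fun j hj => ?_⟩
    rw [hf, binomPMF_eq_zero (show n₁ < j by omega)]
    exact binomPMF_nonneg h₂ _ _

theorem binomial_stochastic_order_sufficient (n₁ n₂ : ℕ) (p₁ p₂ : ℝ)
    (hn₁ : 1 ≤ n₁) (hn : n₁ ≤ n₂)
    (h₁ : p₁ ∈ Set.Ioo (0:ℝ) 1) (h₂ : p₂ ∈ Set.Ioo (0:ℝ) 1)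
    (hL : (1 - p₂) ^ n₂ ≤ (1 - p₁) ^ n₁) :
    ∀ k : ℕ, (∑' j : ℕ, if k ≤ j then binomPMF n₁ p₁ j else 0)
      ≤ ∑' j : ℕ, if k ≤ j then binomPMF n₂ p₂ j else 0 := by
  intro k
  have hsupp1 : ∀ j ∉ Finset.range (n₂+1), (if k ≤ j then binomPMF n₁ p₁ j else 0) = 0 := by
    intro j hj
    simp only [Finset.mem_range, not_lt] at hj
    rw [binomPMF_eq_zero (show n₁ < j by omega)]
    simp
  have hsupp2 : ∀ j ∉ Finset.range (n₂+1), (if k ≤ j then binomPMF n₂ p₂ j else 0) = 0 := by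
    intro j hj
    simp only [Finset.mem_range, not_lt] at hj
    rw [binomPMF_eq_zero (show n₂ < j by omega)]
    simp
  rw [tsum_eq_sum hsupp1, tsum_eq_sum hsupp2]
  obtain ⟨j₀, hlt, hge⟩ := binom_crossing n₁ n₂ p₁ p₂ hn h₁ h₂ hL
  rcases le_or_gt j₀ k with hk | hk
  · apply Finset.sum_le_sum
    intro j _
    split_ifs with h
    · exact hge j (le_trans hk h)
    · exact le_rfl
  · -- k < j₀
    have hsplit : ∀ F : ℕ → ℝ, ∑ j ∈ Finset.range (n₂+1), (if k ≤ j then F j else 0)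
        = ∑ j ∈ Finset.range (n₂+1), F j
          - ∑ j ∈ Finset.range (n₂+1), (if j < k then F j else 0) := by
      intro F
      rw [← Finset.sum_sub_distrib]
      apply Finset.sum_congr rfl
      intro j _
      split_ifs with h h'
      · exfalso; omega
      · ring
      · ring
      · exfalso; omega
    rw [hsplit, hsplit]
    have ht1 : ∑ j ∈ Finset.range (n₂+1), binomPMF n₁ p₁ j = 1 := by
      rw [← binomPMF_sum n₁ p₁]
      symm
      apply Finset.sum_subset (Finset.range_subset_range.mpr (by omega))
      intro j _ hj
      simp only [Finset.mem_range, not_lt] at hj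
      exact binomPMF_eq_zero (by omega) p₁
    have ht2 : ∑ j ∈ Finset.range (n₂+1), binomPMF n₂ p₂ j = 1 := binomPMF_sum n₂ p₂
    rw [ht1, ht2]
    have : ∑ j ∈ Finset.range (n₂+1), (if j < k then binomPMF n₂ p₂ j else 0)
        ≤ ∑ j ∈ Finset.range (n₂+1), (if j < k then binomPMF n₁ p₁ j else 0) := by
      apply Finset.sum_le_sum
      intro j _
      split_ifs with h
      · exact hlt j (by omega)
      · exact le_rfl
    linarith
end

section
/- For n₁, n₂ ∈ ℕ and p₁, p₂ ∈ (0,1) with p₁ > 0, the binomial distribution b_{n₁,p₁} is stochastically smaller than b_{n₂,p₂} if and only if n₁ ≤ n₂ and (1-p₁)^{n₁} ≥ (1-p₂)^{n₂}. -/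
open Finset

namespace BinomAux

noncomputable def Tail (n : ℕ) (p : ℝ) (k : ℕ) : ℝ := ∑ j ∈ Finset.Icc k n, binomPMF n p j

lemma binomPMF_eq_zero {n j : ℕ} (h : n < j) (p : ℝ) : binomPMF n p j = 0 := by
  simp [binomPMF, Nat.choose_eq_zero_of_lt h]

lemma tsum_eq_tail (n k : ℕ) (p : ℝ) :
    (∑' j : ℕ, if k ≤ j then binomPMF n p j else 0) = Tail n p k := by
  rw [Tail, tsum_eq_sum (s := Finset.Icc k n)]
  · exact Finset.sum_congr rfl fun j hj => by
      simp only [Finset.mem_Icc] at hj; simp [hj.1]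
  · intro j hj
    simp only [Finset.mem_Icc, not_and_or, not_le] at hj
    rcases hj with h | h
    · simp [Nat.not_le_of_lt h]
    · simp [binomPMF_eq_zero h]

lemma tail_zero_eq_one (n : ℕ) (p : ℝ) : Tail n p 0 = 1 := by
  have h := add_pow p (1 - p) n
  simp only [add_sub_cancel, one_pow] at h
  rw [Tail]
  rw [show Finset.Icc 0 n = Finset.range (n+1) by rw [← Finset.Ico_add_one_right_eq_Icc, Nat.Ico_zero_eq_range]]
  rw [show (1:ℝ) = (p + (1-p))^n by ring_nf]
  rw [add_pow]
  exact Finset.sum_congr rfl fun j _ => by simp only [binomPMF]; ring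

lemma tail_nonneg {p : ℝ} (h0 : 0 ≤ p) (h1 : p ≤ 1) (n k : ℕ) : 0 ≤ Tail n p k := by
  apply Finset.sum_nonneg
  intro j _
  have h2 : 0 ≤ 1 - p := by linarith
  simp only [binomPMF]
  have := Nat.cast_nonneg (α := ℝ) (n.choose j)
  positivity

noncomputable def D (n k : ℕ) (p : ℝ) : ℝ :=
  (k : ℝ) * (n.choose k : ℝ) * p ^ (k - 1) * (1 - p) ^ (n - k)

lemma hasDerivAt_term (n j : ℕ) (hj : j ≤ n) (p : ℝ) :
    HasDerivAt (fun p => binomPMF n p j) (D n j p - D n (j+1) p) p := by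
  have h1 : HasDerivAt (fun p : ℝ => p ^ j) ((j:ℝ) * p ^ (j-1)) p := hasDerivAt_pow j p
  have h2 : HasDerivAt (fun p : ℝ => (1-p) ^ (n-j)) (-(((n-j : ℕ):ℝ) * (1-p) ^ (n-j-1))) p := by
    have hinner : HasDerivAt (fun p : ℝ => 1 - p) (-1) p := by
      simpa using (hasDerivAt_id p).const_sub (1:ℝ)
    have := (hasDerivAt_pow (n-j) (1-p)).comp p hinner
    simpa [mul_comm, Function.comp_def] using this
  have h3 := (h1.mul h2).const_mul ((n.choose j : ℕ) : ℝ)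
  have hgoal : (n.choose j : ℝ) * (((j:ℝ) * p ^ (j-1)) * (1-p)^(n-j) + p ^ j * (-(((n-j:ℕ):ℝ) * (1-p)^(n-j-1))))
      = D n j p - D n (j+1) p := by
    have hc : ((n.choose (j+1) * (j+1) : ℕ) : ℝ) = ((n.choose j * (n - j) : ℕ) : ℝ) := by
      rw [Nat.choose_succ_right_eq]
    push_cast at hc
    have he : n - (j+1) = n - j - 1 := by omega
    simp only [D, Nat.add_sub_cancel, he]
    push_cast
    linear_combination (p ^ j * (1-p)^(n-j-1)) * hc
  exact hgoal ▸ (by simpa [binomPMF, mul_assoc] using h3)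

lemma hasDerivAt_tail (n k : ℕ) (p : ℝ) :
    HasDerivAt (fun p => Tail n p k) (D n k p) p := by
  rcases le_or_gt k n with hk | hk
  · have h := HasDerivAt.fun_sum (u := Finset.Icc k n)
      (fun j hj => hasDerivAt_term n j (Finset.mem_Icc.mp hj).2 p)
    have htel : ∑ j ∈ Finset.Icc k n, (D n j p - D n (j+1) p) = D n k p := by
      rw [← Finset.Ico_add_one_right_eq_Icc, Finset.sum_Ico_eq_sum_range]
      simp only [Nat.succ_eq_add_one, add_assoc]
      rw [Finset.sum_range_sub' (fun i => D n (k+i) p)]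
      have h1 : k + (n + 1 - k) = n + 1 := by omega
      have h2 : D n (n+1) p = 0 := by simp [D, Nat.choose_succ_self]
      simp [h1, h2]
    rw [htel] at h
    exact h
  · have h2 : D n k p = 0 := by simp [D, Nat.choose_eq_zero_of_lt hk]
    have h3 : ∀ q : ℝ, Tail n q k = 0 := by
      intro q; rw [Tail, Finset.Icc_eq_empty_of_lt hk, Finset.sum_empty]
    rw [h2]
    simp only [h3]
    exact hasDerivAt_const p 0

lemma D_nonneg (n k : ℕ) {p : ℝ} (h0 : 0 ≤ p) (h1 : p ≤ 1) : 0 ≤ D n k p := by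
  have h2 : (0:ℝ) ≤ 1 - p := by linarith
  have h3 : (0:ℝ) ≤ (n.choose k : ℝ) := Nat.cast_nonneg _
  have h4 : (0:ℝ) ≤ (k : ℝ) := Nat.cast_nonneg _
  rw [D]; positivity

lemma tail_differentiable (n k : ℕ) : Differentiable ℝ (fun p => Tail n p k) :=
  fun p => (hasDerivAt_tail n k p).differentiableAt

lemma tail_mono (n k : ℕ) {p q : ℝ} (h0 : 0 ≤ p) (hpq : p ≤ q) (h1 : q ≤ 1) :
    Tail n p k ≤ Tail n q k := by
  have hmono : MonotoneOn (fun p => Tail n p k) (Set.Icc 0 1) := by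
    apply monotoneOn_of_deriv_nonneg (convex_Icc 0 1)
      (tail_differentiable n k).continuous.continuousOn
      ((tail_differentiable n k).differentiableOn)
    intro x hx
    rw [interior_Icc, Set.mem_Ioo] at hx
    rw [(hasDerivAt_tail n k x).deriv]
    exact D_nonneg n k hx.1.le hx.2.le
  exact hmono ⟨h0, le_trans hpq h1⟩ ⟨le_trans h0 hpq, h1⟩ hpq

lemma lemmaR (n : ℕ) {u v : ℝ} (h0 : 0 ≤ u) (huv : u ≤ v) (h1 : v ≤ 1) :
    (u - u^(n+1)) * (1 - v^(n+1)) ≤ (v - v^(n+1)) * (1 - u^(n+1)) := by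
  have hu1 : u ≤ 1 := le_trans huv h1
  have hv0 : 0 ≤ v := le_trans h0 huv
  set A : ℝ := ∑ i ∈ Finset.range (n+1), v^i * u^(n-i) with hAdef
  set B : ℝ := ∑ i ∈ Finset.range n, v^i * u^(n-1-i) with hBdef
  have hA : A * (v - u) = v^(n+1) - u^(n+1) := by
    simpa using geom_sum₂_mul v u (n+1)
  have hB : B * (v - u) = v^n - u^n := geom_sum₂_mul v u n
  have key : (v - v^(n+1)) * (1 - u^(n+1)) - (u - u^(n+1)) * (1 - v^(n+1))
      = (v - u) * (1 - (A - u*v*B)) := by linear_combination hA - u*v*hB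
  have hsplit : A - u*v*B = u^n + ∑ i ∈ Finset.range n, v^(i+1) * u^(n-1-i) * (1-u) := by
    rw [hAdef, Finset.sum_range_succ' (fun i => v^i * u^(n-i)) n, hBdef, Finset.mul_sum]
    simp only [pow_zero, one_mul, Nat.sub_zero]
    rw [add_sub_right_comm, ← Finset.sum_sub_distrib, add_comm]
    congr 1
    apply Finset.sum_congr rfl
    intro i hi
    have he : n - (i+1) = n - 1 - i := by omega
    rw [he]
    ring
  have hbound : ∑ i ∈ Finset.range n, v^(i+1) * u^(n-1-i) * (1-u)
      ≤ ∑ i ∈ Finset.range n, u^(n-1-i) * (1-u) := by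
    apply Finset.sum_le_sum
    intro i _
    have h2 : (0:ℝ) ≤ 1 - u := by linarith
    have h3 : v^(i+1) ≤ 1 := pow_le_one₀ hv0 h1
    have h4 : (0:ℝ) ≤ u^(n-1-i) * (1-u) := mul_nonneg (pow_nonneg h0 _) h2
    calc v^(i+1) * u^(n-1-i) * (1-u) = v^(i+1) * (u^(n-1-i) * (1-u)) := by ring
      _ ≤ u^(n-1-i) * (1-u) := mul_le_of_le_one_left h4 h3
  have hgeom : ∑ i ∈ Finset.range n, u^(n-1-i) * (1-u) = 1 - u^n := by
    rw [← Finset.sum_mul, Finset.sum_range_reflect (fun j => u^j) n]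
    linear_combination -geom_sum_mul u n
  have hle1 : A - u*v*B ≤ 1 := by
    rw [hsplit]
    calc u^n + ∑ i ∈ Finset.range n, v^(i+1) * u^(n-1-i) * (1-u)
        ≤ u^n + ∑ i ∈ Finset.range n, u^(n-1-i) * (1-u) := by linarith
      _ = 1 := by rw [hgeom]; ring
  nlinarith [mul_nonneg (sub_nonneg.mpr huv) (sub_nonneg.mpr hle1)]

lemma crossing (n b : ℕ) {u v : ℝ} (h0 : 0 ≤ u) (huv : u ≤ v) (h1 : v ≤ 1)
    (hs : ((n-b : ℕ):ℝ) * (1 - u^(n+1))^b ≤ (n:ℝ) * (u - u^(n+1))^b) :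
    ((n-b : ℕ):ℝ) * (1 - v^(n+1))^b ≤ (n:ℝ) * (v - v^(n+1))^b := by
  have hv0 : 0 ≤ v := le_trans h0 huv
  have hu1 : u ≤ 1 := le_trans huv h1
  rcases eq_or_lt_of_le hu1 with he | hu1'
  · -- u = 1, hence v = 1
    have hv1 : v = 1 := le_antisymm h1 (he ▸ huv)
    have hvu : v = u := hv1.trans he.symm
    rw [hvu]
    exact hs
  · -- u < 1
    have hq : (0:ℝ) < 1 - u^(n+1) := by
      have : u^(n+1) < 1 := pow_lt_one₀ h0 hu1' (by omega)
      linarith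
    have hqb : (0:ℝ) < (1 - u^(n+1))^b := pow_pos hq b
    have huu : 0 ≤ u - u^(n+1) := by
      have h := pow_le_of_le_one h0 hu1 (Nat.succ_ne_zero n)
      simp only [Nat.succ_eq_add_one] at h
      linarith
    have hR := lemmaR n h0 huv h1
    have hRb : (u - u^(n+1))^b * (1 - v^(n+1))^b ≤ (v - v^(n+1))^b * (1 - u^(n+1))^b := by
      rw [← mul_pow, ← mul_pow]
      apply pow_le_pow_left₀ _ hR
      apply mul_nonneg huu
      have : v^(n+1) ≤ 1 := pow_le_one₀ hv0 h1
      linarith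
    have hvq : (0:ℝ) ≤ (1 - v^(n+1))^b := by
      apply pow_nonneg
      have : v^(n+1) ≤ 1 := pow_le_one₀ hv0 h1
      linarith
    -- multiply hs by (1-v^(n+1))^b ≥ 0, combine with hRb, cancel (1-u^(n+1))^b > 0
    rw [← mul_le_mul_iff_of_pos_right hqb]
    calc ((n-b : ℕ):ℝ) * (1 - v^(n+1))^b * (1 - u^(n+1))^b
        = (((n-b : ℕ):ℝ) * (1 - u^(n+1))^b) * (1 - v^(n+1))^b := by ring
      _ ≤ ((n:ℝ) * (u - u^(n+1))^b) * (1 - v^(n+1))^b :=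
          mul_le_mul_of_nonneg_right hs hvq
      _ = (n:ℝ) * ((u - u^(n+1))^b * (1 - v^(n+1))^b) := by ring
      _ ≤ (n:ℝ) * ((v - v^(n+1))^b * (1 - u^(n+1))^b) := by
          apply mul_le_mul_of_nonneg_left hRb (Nat.cast_nonneg n)
      _ = (n:ℝ) * (v - v^(n+1))^b * (1 - u^(n+1))^b := by ring

lemma tail_at_one {n k : ℕ} (hk : k ≤ n) : Tail n 1 k = 1 := by
  rw [Tail, Finset.sum_eq_single n]
  · simp [binomPMF]
  · intro j hj hne
    have hjn : j < n := lt_of_le_of_ne (Finset.mem_Icc.mp hj).2 hne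
    simp [binomPMF, zero_pow, Nat.sub_ne_zero_of_lt hjn]
  · intro h
    exact absurd (Finset.mem_Icc.mpr ⟨hk, le_refl n⟩) h

lemma tail_at_zero {n k : ℕ} (hk : 1 ≤ k) : Tail n 0 k = 0 := by
  rw [Tail]
  apply Finset.sum_eq_zero
  intro j hj
  have hj0 : j ≠ 0 := by
    have := (Finset.mem_Icc.mp hj).1; omega
  simp [binomPMF, zero_pow hj0]

lemma choose_id (a b : ℕ) :
    (a+b+2) * Nat.choose (a+b+1) (b+1) = (Nat.choose (a+b+2) (b+1)) * (a+1) := by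
  have h1 := Nat.add_one_mul_choose_eq (a+b+1) a
  have h2 : Nat.choose (a+b+1) a = Nat.choose (a+b+1) (b+1) := by
    have h := Nat.choose_symm (n := a+b+1) (k := b+1) (by omega)
    rwa [show (a+b+1)-(b+1) = a by omega] at h
  have h3 : Nat.choose (a+b+2) (a+1) = Nat.choose (a+b+2) (b+1) := by
    have h := Nat.choose_symm (n := a+b+2) (k := b+1) (by omega)
    rwa [show (a+b+2)-(b+1) = a+1 by omega] at h
  rw [← h2, ← h3]
  exact h1

lemma Hd_factor (a b : ℕ) (x : ℝ) :
    D (a+b+2) (b+1) (1 - x^(a+b+1)) * (-(((a+b+1 : ℕ):ℝ) * x^(a+b)))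
      - D (a+b+1) (b+1) (1 - x^(a+b+2)) * (-(((a+b+2 : ℕ):ℝ) * x^(a+b+1)))
    = ((b+1 : ℕ):ℝ) * (((a+b+2).choose (b+1) : ℕ):ℝ) * x^((a+b+2)*a + (a+b+1)) *
      (((a+1 : ℕ):ℝ) * (1 - x^(a+b+2))^b - ((a+b+1 : ℕ):ℝ) * (x - x^(a+b+2))^b) := by
  have hch := choose_id a b
  have hcast : ((a:ℝ)+b+2) * ((a+b+1).choose (b+1) : ℝ)
      = ((a+b+2).choose (b+1) : ℝ) * ((a:ℝ)+1) := by exact_mod_cast congrArg (Nat.cast (R := ℝ)) hch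
  simp only [D]
  rw [show (b+1) - 1 = b by omega, show (a+b+2) - (b+1) = a+1 by omega,
    show (a+b+1) - (b+1) = a by omega]
  rw [show (1 : ℝ) - (1 - x^(a+b+1)) = x^(a+b+1) by ring,
    show (1 : ℝ) - (1 - x^(a+b+2)) = x^(a+b+2) by ring]
  rw [show (x : ℝ) - x^(a+b+2) = x * (1 - x^(a+b+1)) by ring]
  push_cast
  rw [mul_pow]
  rw [← pow_mul, ← pow_mul]
  linear_combination (((b:ℝ)+1) * x^((a+b+2)*a + (a+b+1)) * (1-x^(a+b+2))^b) * hcast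

lemma lemmaB (n k : ℕ) (hn : 1 ≤ n) {u : ℝ} (h0 : 0 ≤ u) (h1 : u ≤ 1) :
    Tail n (1 - u^(n+1)) k ≤ Tail (n+1) (1 - u^n) k := by
  rcases Nat.eq_zero_or_pos k with hk0 | hk1
  · subst hk0
    rw [tail_zero_eq_one, tail_zero_eq_one]
  rcases le_or_gt k n with hkn | hkn
  swap
  · -- k > n : LHS = 0
    have hL : Tail n (1 - u^(n+1)) k = 0 := by
      rw [Tail, Finset.Icc_eq_empty_of_lt hkn, Finset.sum_empty]
    rw [hL]
    have hp0 : (0:ℝ) ≤ 1 - u^n := by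
      have : u^n ≤ 1 := pow_le_one₀ h0 h1
      linarith
    have hp1 : (1:ℝ) - u^n ≤ 1 := by
      have : (0:ℝ) ≤ u^n := pow_nonneg h0 n
      linarith
    exact tail_nonneg hp0 hp1 (n+1) k
  -- main case 1 ≤ k ≤ n
  obtain ⟨b, rfl⟩ : ∃ b, k = b + 1 := ⟨k - 1, by omega⟩
  obtain ⟨a, rfl⟩ : ∃ a, n = a + b + 1 := ⟨n - b - 1, by omega⟩
  set n := a + b + 1 with hndef
  -- H and its derivative
  set H : ℝ → ℝ := fun x => Tail (n+1) (1 - x^n) (b+1) - Tail n (1 - x^(n+1)) (b+1) with hHdef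
  set Hd : ℝ → ℝ := fun x =>
    D (n+1) (b+1) (1 - x^n) * (-((n : ℕ):ℝ) * x^(n-1))
      - D n (b+1) (1 - x^(n+1)) * (-((n+1 : ℕ):ℝ) * x^n) with hHd
  have hH : ∀ x : ℝ, HasDerivAt H (Hd x) x := by
    intro x
    have i1 : HasDerivAt (fun x : ℝ => 1 - x^n) (-(((n:ℕ):ℝ) * x^(n-1))) x :=
      (hasDerivAt_pow n x).const_sub 1
    have i2 : HasDerivAt (fun x : ℝ => 1 - x^(n+1)) (-(((n+1:ℕ):ℝ) * x^((n+1)-1))) x :=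
      (hasDerivAt_pow (n+1) x).const_sub 1
    have c1 := (hasDerivAt_tail (n+1) (b+1) (1 - x^n)).comp x i1
    have c2 := (hasDerivAt_tail n (b+1) (1 - x^(n+1))).comp x i2
    have := c1.sub c2
    simp only [Nat.add_sub_cancel] at this i2 ⊢
    exact this.congr_deriv (by simp only [hHd]; ring)
  -- sign of Hd
  have hsign : ∀ x : ℝ, 0 ≤ x →
      ( (((n-b:ℕ):ℝ) * (1 - x^(n+1))^b ≤ (n:ℝ) * (x - x^(n+1))^b → Hd x ≤ 0)
      ∧ ((n:ℝ) * (x - x^(n+1))^b ≤ ((n-b:ℕ):ℝ) * (1 - x^(n+1))^b → 0 ≤ Hd x) ) := by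
    intro x hx
    have hfac : Hd x = ((b+1 : ℕ):ℝ) * (((n+1).choose (b+1) : ℕ):ℝ) * x^((n+1)*a + n) *
        (((a+1 : ℕ):ℝ) * (1 - x^(n+1))^b - ((n : ℕ):ℝ) * (x - x^(n+1))^b) := by
      have h := Hd_factor a b x
      rw [hHd]
      simp only [hndef]
      rw [show a+b+1+1 = a+b+2 by omega] at *
      convert h using 2 <;> push_cast <;> ring
    have hab : ((n - b : ℕ):ℝ) = ((a+1 : ℕ):ℝ) := by norm_cast; omega
    have hC : (0:ℝ) ≤ ((b+1 : ℕ):ℝ) * (((n+1).choose (b+1) : ℕ):ℝ) * x^((n+1)*a + n) := by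
      have := pow_nonneg hx ((n+1)*a + n)
      positivity
    constructor
    · intro hs
      rw [hfac]
      apply mul_nonpos_of_nonneg_of_nonpos hC
      rw [← hab]
      linarith
    · intro hs
      rw [hfac]
      apply mul_nonneg hC
      rw [← hab]
      linarith
  -- differentiability
  have hdiff : Differentiable ℝ H := fun x => (hH x).differentiableAt
  have hcont : Continuous H := hdiff.continuous
  -- endpoints
  have hH0 : H 0 = 0 := by
    have hn0 : (0:ℝ)^n = 0 := zero_pow (by omega)
    have hn1 : (0:ℝ)^(n+1) = 0 := zero_pow (by omega)
    simp only [hHdef, hn0, hn1, sub_zero]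
    rw [tail_at_one (by omega), tail_at_one (by omega), sub_self]
  have hH1 : H 1 = 0 := by
    simp only [hHdef, one_pow, sub_self]
    rw [tail_at_zero (by omega), tail_at_zero (by omega), sub_self]
  -- main dichotomy
  have hfinal : 0 ≤ H u := by
    by_cases hs : ∀ x ∈ Set.Ioo (0:ℝ) u,
        (n:ℝ) * (x - x^(n+1))^b ≤ ((n-b:ℕ):ℝ) * (1 - x^(n+1))^b
    · -- Hd ≥ 0 on (0,u) : H monotone on [0,u], H u ≥ H 0 = 0
      have hmono : MonotoneOn H (Set.Icc 0 u) := by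
        apply monotoneOn_of_deriv_nonneg (convex_Icc 0 u) hcont.continuousOn
          hdiff.differentiableOn
        intro x hx
        rw [interior_Icc] at hx
        rw [(hH x).deriv]
        exact (hsign x hx.1.le).2 (hs x hx)
      have := hmono (Set.mem_Icc.mpr ⟨le_refl 0, h0⟩) (Set.mem_Icc.mpr ⟨h0, le_refl u⟩) h0
      rw [hH0] at this; exact this
    · push_neg at hs
      obtain ⟨x₀, hx₀, hx₀s⟩ := hs
      rw [Set.mem_Ioo] at hx₀
      -- s ≥ 0 on [x₀,1], so Hd ≤ 0 on (u,1) : H antitone on [u,1], H u ≥ H 1 = 0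
      have hanti : AntitoneOn H (Set.Icc u 1) := by
        apply antitoneOn_of_deriv_nonpos (convex_Icc u 1) hcont.continuousOn
          hdiff.differentiableOn
        intro x hx
        rw [interior_Icc, Set.mem_Ioo] at hx
        rw [(hH x).deriv]
        apply ((hsign x (le_trans h0 hx.1.le)).1)
        exact crossing n b hx₀.1.le (le_trans hx₀.2.le hx.1.le) hx.2.le hx₀s.le
      have := hanti (Set.mem_Icc.mpr ⟨le_refl u, h1⟩) (Set.mem_Icc.mpr ⟨h1, le_refl 1⟩) h1
      rw [hH1] at this; exact this
  simpa [hHdef, sub_nonneg] using hfinal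

lemma lemmaC (n : ℕ) (hn : 1 ≤ n) {c : ℝ} (hc0 : 0 < c) (hc1 : c < 1) (k : ℕ) :
    ∀ m, n ≤ m → Tail n (1 - c ^ ((n:ℝ)⁻¹)) k ≤ Tail m (1 - c ^ ((m:ℝ)⁻¹)) k := by
  intro m hnm
  induction m, hnm using Nat.le_induction with
  | base => exact le_refl _
  | succ m hm ih =>
    refine le_trans ih ?_
    have hm1 : 1 ≤ m := le_trans hn hm
    have hm0 : (m:ℝ) ≠ 0 := by positivity
    have hm10 : ((m:ℝ)+1) ≠ 0 := by positivity
    set u : ℝ := c ^ (((m:ℝ) * ((m:ℝ)+1))⁻¹) with hu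
    have hue : ∀ j : ℕ, u ^ j = c ^ (((m:ℝ) * ((m:ℝ)+1))⁻¹ * (j:ℝ)) := by
      intro j
      rw [hu, ← Real.rpow_natCast (c ^ (((m:ℝ) * ((m:ℝ)+1))⁻¹)) j, ← Real.rpow_mul hc0.le]
    have h1 : u ^ (m+1) = c ^ ((m:ℝ)⁻¹) := by
      rw [hue (m+1)]
      congr 1
      push_cast
      field_simp
    have h2 : u ^ m = c ^ (((m:ℝ)+1)⁻¹) := by
      rw [hue m]
      congr 1
      field_simp
    have hu0 : 0 ≤ u := (Real.rpow_pos_of_pos hc0 _).le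
    have hu1 : u ≤ 1 := Real.rpow_le_one hc0.le hc1.le (by positivity)
    have := lemmaB m k hm1 hu0 hu1
    rw [h1, h2] at this
    have hcast : ((m+1 : ℕ):ℝ)⁻¹ = ((m:ℝ)+1)⁻¹ := by push_cast; ring
    rw [hcast]
    exact this

lemma tail_one_eq {n : ℕ} (hn : 1 ≤ n) (p : ℝ) : Tail n p 1 = 1 - (1-p)^n := by
  have h0 := tail_zero_eq_one n p
  rw [Tail] at h0 ⊢
  rw [← Finset.Ioc_insert_left (Nat.zero_le n),
    Finset.sum_insert Finset.left_notMem_Ioc] at h0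
  rw [show Finset.Icc 1 n = Finset.Ioc 0 n from Finset.Icc_add_one_left_eq_Ioc 0 n]
  have hb0 : binomPMF n p 0 = (1-p)^n := by simp [binomPMF]
  linarith

end BinomAux

open BinomAux


theorem binomial_stochastic_order_iff (n₁ n₂ : ℕ) (p₁ p₂ : ℝ)
    (hn₁ : 1 ≤ n₁) (hn₂ : 1 ≤ n₂)
    (h₁ : p₁ ∈ Set.Ioo (0:ℝ) 1) (h₂ : p₂ ∈ Set.Ioo (0:ℝ) 1) :
    (∀ k : ℕ, (∑' j : ℕ, if k ≤ j then binomPMF n₁ p₁ j else 0)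
        ≤ ∑' j : ℕ, if k ≤ j then binomPMF n₂ p₂ j else 0)
      ↔ n₁ ≤ n₂ ∧ (1 - p₂) ^ n₂ ≤ (1 - p₁) ^ n₁ := by
  obtain ⟨hp₁0, hp₁1⟩ := h₁
  obtain ⟨hp₂0, hp₂1⟩ := h₂
  constructor
  · intro h
    constructor
    · by_contra hlt
      push_neg at hlt
      have h' := h (n₂+1)
      rw [tsum_eq_tail, tsum_eq_tail] at h'
      have hR : Tail n₂ p₂ (n₂+1) = 0 := by
        rw [Tail, Finset.Icc_eq_empty_of_lt (by omega), Finset.sum_empty]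
      have hL : binomPMF n₁ p₁ n₁ ≤ Tail n₁ p₁ (n₂+1) := by
        apply Finset.single_le_sum (f := fun j => binomPMF n₁ p₁ j)
        · intro j _
          simp only [binomPMF]
          have hp : (0:ℝ) ≤ 1 - p₁ := by linarith
          have hc : (0:ℝ) ≤ (n₁.choose j : ℝ) := Nat.cast_nonneg _
          positivity
        · exact Finset.mem_Icc.mpr ⟨by omega, le_refl n₁⟩
      have hpos : (0:ℝ) < binomPMF n₁ p₁ n₁ := by
        simp only [binomPMF, Nat.choose_self, Nat.sub_self, pow_zero, Nat.cast_one]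
        have := pow_pos hp₁0 n₁
        nlinarith
      rw [hR] at h'
      linarith
    · have h' := h 1
      rw [tsum_eq_tail, tsum_eq_tail, tail_one_eq hn₁, tail_one_eq hn₂] at h'
      linarith
  · rintro ⟨hle, hpow⟩ k
    rw [tsum_eq_tail, tsum_eq_tail]
    have hq₁ : (0:ℝ) < 1 - p₁ := by linarith
    have hq₂ : (0:ℝ) < 1 - p₂ := by linarith
    set c : ℝ := (1 - p₁)^n₁ with hc
    have hc0 : 0 < c := pow_pos hq₁ n₁
    have hc1 : c < 1 := pow_lt_one₀ hq₁.le (by linarith) (by omega)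
    have hcn₁ : c ^ ((n₁:ℝ)⁻¹) = 1 - p₁ :=
      Real.pow_rpow_inv_natCast hq₁.le (by omega)
    have hqle : 1 - p₂ ≤ c ^ ((n₂:ℝ)⁻¹) := by
      have h2 := Real.rpow_le_rpow (pow_nonneg hq₂.le n₂) hpow (by positivity : (0:ℝ) ≤ (n₂:ℝ)⁻¹)
      rwa [Real.pow_rpow_inv_natCast hq₂.le (by omega)] at h2
    have hql1 : c ^ ((n₂:ℝ)⁻¹) ≤ 1 := Real.rpow_le_one hc0.le hc1.le (by positivity)
    have step2 : Tail n₂ (1 - c ^ ((n₂:ℝ)⁻¹)) k ≤ Tail n₂ p₂ k := by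
      apply tail_mono n₂ k (by linarith) (by linarith) (by linarith)
    have hp₁eq : p₁ = 1 - c ^ ((n₁:ℝ)⁻¹) := by rw [hcn₁]; ring
    calc Tail n₁ p₁ k = Tail n₁ (1 - c ^ ((n₁:ℝ)⁻¹)) k := by rw [← hp₁eq]
      _ ≤ Tail n₂ (1 - c ^ ((n₂:ℝ)⁻¹)) k := lemmaC n₁ hn₁ hc0 hc1 k n₂ hle
      _ ≤ Tail n₂ p₂ k := step2
end

section
/- For r₁, r₂ > 0 and p₁, p₂ ∈ (0,1], the negative binomial distribution b⁻_{r₁,p₁} is stochastically smaller than b⁻_{r₂,p₂} if and only if p₁ ≥ p₂ and p₁^{r₁} ≥ p₂^{r₂}. -/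
open Finset Filter

/-- The negative binomial weight `b⁻_{r,p}({k}) = C(r+k-1,k) p^r (1-p)^k`,
where `C(r+k-1,k) = ∏_{l=1}^k (r+l-1)/l`. -/
noncomputable def negBinomPMF (r p : ℝ) (k : ℕ) : ℝ :=
  (∏ l ∈ Finset.range k, (r + l) / (l + 1)) * p ^ r * (1 - p) ^ k

namespace NegBinomAux

/-- binomial-type coefficient -/
noncomputable def nbc (r : ℝ) (k : ℕ) : ℝ := ∏ l ∈ Finset.range k, (r + l) / (l + 1)

lemma nbc_zero (r : ℝ) : nbc r 0 = 1 := by simp [nbc]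

lemma nbc_succ (r : ℝ) (k : ℕ) : nbc r (k + 1) = nbc r k * ((r + k) / (k + 1)) :=
  Finset.prod_range_succ _ _

lemma nbc_pos {r : ℝ} (hr : 0 < r) (k : ℕ) : 0 < nbc r k := by
  induction k with
  | zero => simp [nbc]
  | succ k ih =>
    rw [nbc_succ]
    have h1 : (0:ℝ) < r + k := by positivity
    have h2 : (0:ℝ) < (k:ℝ) + 1 := by positivity
    exact mul_pos ih (div_pos h1 h2)

lemma nbc_le_pow {r : ℝ} (hr : 0 < r) {m : ℕ} (hm : r ≤ m) (k : ℕ) :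
    nbc r k ≤ ((k:ℝ) + 1) ^ m := by
  induction k with
  | zero => simp [nbc]
  | succ k ih =>
    have hk1 : (0:ℝ) < (k:ℝ) + 1 := by positivity
    have hb : 1 + (m:ℝ) * (1 / ((k:ℝ)+1)) ≤ (1 + 1 / ((k:ℝ)+1)) ^ m := by
      refine one_add_mul_le_pow ?_ m
      have : (0:ℝ) ≤ 1 / ((k:ℝ)+1) := by positivity
      linarith
    have e1 : (1:ℝ) + 1 / ((k:ℝ)+1) = ((k:ℝ)+2) / ((k:ℝ)+1) := by field_simp; ring
    have h2 : ((m:ℝ) + k) / ((k:ℝ)+1) ≤ (((k:ℝ)+2) / ((k:ℝ)+1)) ^ m := by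
      rw [← e1]
      refine le_trans ?_ hb
      rw [div_le_iff₀ hk1, add_mul, one_mul, mul_assoc, one_div,
        inv_mul_cancel₀ hk1.ne', mul_one]
      linarith
    have hrk : (r + k) / ((k:ℝ)+1) ≤ ((m:ℝ) + k) / ((k:ℝ)+1) := by gcongr
    have ecast : ((k+1:ℕ):ℝ) + 1 = (k:ℝ) + 2 := by push_cast; ring
    rw [ecast]
    calc nbc r (k+1) = nbc r k * ((r + k) / (k + 1)) := nbc_succ r k
      _ ≤ (((k:ℝ)+1) ^ m) * (((m:ℝ) + k) / ((k:ℝ)+1)) := by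
          apply mul_le_mul ih (hrk) ?_ (by positivity)
          · positivity
      _ ≤ (((k:ℝ)+1) ^ m) * ((((k:ℝ)+2) / ((k:ℝ)+1)) ^ m) := by
          apply mul_le_mul_of_nonneg_left h2 (by positivity)
      _ = ((k:ℝ)+2) ^ m := by
          rw [← mul_pow, mul_div_cancel₀ _ hk1.ne']

lemma nbc_ge {r : ℝ} (hr : 0 < r) : ∀ k : ℕ, 1 ≤ k → r / k ≤ nbc r k := by
  intro k
  induction k with
  | zero => intro h; omega
  | succ k ih =>
    intro _
    rcases Nat.eq_zero_or_pos k with hk | hk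
    · subst hk; simp [nbc_succ, nbc_zero]
    · have h1 := ih hk
      have hk0 : (0:ℝ) < (k:ℝ) := by exact_mod_cast hk
      have hk1 : (0:ℝ) < (k:ℝ) + 1 := by positivity
      have h2 : r / ((k:ℝ)+1) ≤ (r / k) * ((r + k) / ((k:ℝ)+1)) := by
        rw [div_mul_div_comm, div_le_div_iff₀ hk1 (by positivity)]
        nlinarith [mul_pos (mul_pos hr hr) hk1]
      calc r / ((k+1:ℕ):ℝ) = r / ((k:ℝ)+1) := by push_cast; ring_nf
        _ ≤ (r / k) * ((r + k) / ((k:ℝ)+1)) := h2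
        _ ≤ nbc r k * ((r + k) / ((k:ℝ)+1)) := by
            exact mul_le_mul_of_nonneg_right h1 (by positivity)
        _ = nbc r (k+1) := by rw [nbc_succ]

lemma summable_aux (m : ℕ) {q : ℝ} (h0 : 0 ≤ q) (h1 : q < 1) :
    Summable (fun k : ℕ => ((k:ℝ) + 1) ^ m * q ^ k) := by
  rcases eq_or_lt_of_le h0 with h | h
  · apply summable_of_ne_finset_zero (s := {0})
    intro k hk
    simp only [Finset.mem_singleton] at hk
    rw [← h, zero_pow hk, mul_zero]
  · have base : Summable (fun n : ℕ => (n:ℝ) ^ m * q ^ n) :=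
      summable_pow_mul_geometric_of_norm_lt_one m (by rwa [Real.norm_eq_abs, abs_of_nonneg h0])
    have h2 : Summable (fun n : ℕ => ((n+1:ℕ):ℝ) ^ m * q ^ (n+1)) :=
      (summable_nat_add_iff 1).2 base
    refine ((h2.mul_left (1/q)).congr ?_)
    intro n
    push_cast
    rw [pow_succ]
    field_simp

lemma summable_of_le_aux {a : ℕ → ℝ} (m : ℕ) {q : ℝ} (h0 : 0 ≤ q) (h1 : q < 1) (C : ℝ)
    (ha : ∀ n : ℕ, ‖a n‖ ≤ C * (((n:ℝ) + 1) ^ m * q ^ n)) : Summable a :=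
  Summable.of_norm_bounded ((summable_aux m h0 h1).mul_left C) ha



lemma summable_nbc_mul {r : ℝ} (hr : 0 < r) {x : ℝ} (h0 : 0 ≤ x) (h1 : x < 1) :
    Summable (fun n : ℕ => nbc r n * x ^ n) := by
  refine summable_of_le_aux ⌈r⌉₊ h0 h1 1 ?_
  intro n
  rw [one_mul, Real.norm_eq_abs, abs_mul, abs_of_nonneg (nbc_pos hr n).le, abs_pow,
    abs_of_nonneg h0]
  exact mul_le_mul_of_nonneg_right (nbc_le_pow hr (Nat.le_ceil r) n) (by positivity)

lemma summable_mul_nbc_mul {r : ℝ} (hr : 0 < r) {x : ℝ} (h0 : 0 ≤ x) (h1 : x < 1) :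
    Summable (fun n : ℕ => (n:ℝ) * (nbc r n * x ^ n)) := by
  refine summable_of_le_aux (⌈r⌉₊ + 1) h0 h1 1 ?_
  intro n
  rw [one_mul, Real.norm_eq_abs, abs_mul, abs_mul, Nat.abs_cast,
    abs_of_nonneg (nbc_pos hr n).le, abs_pow, abs_of_nonneg h0, pow_succ]
  have h2 : (n:ℝ) * nbc r n ≤ ((n:ℝ)+1)^(⌈r⌉₊) * ((n:ℝ)+1) := by
    have := nbc_le_pow hr (Nat.le_ceil r) n
    have hn : (0:ℝ) ≤ n := Nat.cast_nonneg n
    nlinarith [nbc_pos hr n, pow_nonneg (by linarith : (0:ℝ) ≤ (n:ℝ)+1) (⌈r⌉₊)]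
  calc (n:ℝ) * (nbc r n * x ^ n) = ((n:ℝ) * nbc r n) * x ^ n := by ring
    _ ≤ (((n:ℝ)+1)^(⌈r⌉₊) * ((n:ℝ)+1)) * x ^ n := by
        exact mul_le_mul_of_nonneg_right h2 (by positivity)
    _ = ((n:ℝ)+1)^(⌈r⌉₊) * ((n:ℝ)+1) * x ^ n := rfl

lemma summable_deriv_terms {r : ℝ} (hr : 0 < r) {x : ℝ} (h0 : 0 ≤ x) (h1 : x < 1) :
    Summable (fun n : ℕ => nbc r n * ((n:ℝ) * x ^ (n - 1))) := by
  refine (summable_nat_add_iff 1).1 ?_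
  have key : ∀ n : ℕ, nbc r (n+1) * (((n+1:ℕ):ℝ) * x ^ (n + 1 - 1))
      = (r + n) * (nbc r n * x ^ n) := by
    intro n
    rw [nbc_succ]
    have : (n + 1 - 1) = n := by omega
    rw [this]
    push_cast
    field_simp
  refine Summable.congr ?_ (fun n => (key n).symm)
  refine summable_of_le_aux (⌈r⌉₊ + 1) h0 h1 (⌈r⌉₊ : ℝ) ?_
  intro n
  set m := ⌈r⌉₊ with hm
  have hm1 : 1 ≤ m := Nat.one_le_ceil_iff.mpr hr
  have hmr : r ≤ m := Nat.le_ceil r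
  have hmpos : (0:ℝ) < m := by exact_mod_cast hm1
  rw [Real.norm_eq_abs, abs_mul, abs_mul, abs_of_nonneg (by positivity : (0:ℝ) ≤ r + n),
    abs_of_nonneg (nbc_pos hr n).le, abs_pow, abs_of_nonneg h0]
  have h2 : r + (n:ℝ) ≤ (m:ℝ) * ((n:ℝ) + 1) := by
    have hn : (0:ℝ) ≤ n := Nat.cast_nonneg n
    have hm1' : (1:ℝ) ≤ m := by exact_mod_cast hm1
    nlinarith
  have h3 : nbc r n ≤ ((n:ℝ)+1)^m := nbc_le_pow hr hmr n
  calc (r + n) * (nbc r n * x ^ n)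
      ≤ ((m:ℝ) * ((n:ℝ)+1)) * (((n:ℝ)+1)^m * x ^ n) := by
        apply mul_le_mul h2 (mul_le_mul_of_nonneg_right h3 (by positivity))
          (mul_nonneg (nbc_pos hr n).le (by positivity)) (by positivity)
    _ = (m:ℝ) * (((n:ℝ)+1)^(m+1) * x ^ n) := by ring

lemma deriv_identity {r : ℝ} (hr : 0 < r) {x : ℝ} (h0 : 0 ≤ x) (h1 : x < 1) :
    (1 - x) * (∑' n : ℕ, nbc r n * ((n:ℝ) * x ^ (n - 1)))
      = r * ∑' n : ℕ, nbc r n * x ^ n := by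
  have S0 := summable_nbc_mul hr h0 h1
  have S1 := summable_deriv_terms hr h0 h1
  have Sd := summable_mul_nbc_mul hr h0 h1
  set D := ∑' n : ℕ, nbc r n * ((n:ℝ) * x ^ (n - 1)) with hD
  set G := ∑' n : ℕ, nbc r n * x ^ n with hG
  have key : ∀ n : ℕ, nbc r (n+1) * (((n+1:ℕ):ℝ) * x ^ (n + 1 - 1))
      = r * (nbc r n * x ^ n) + (n:ℝ) * (nbc r n * x ^ n) := by
    intro n
    rw [nbc_succ]
    have : (n + 1 - 1) = n := by omega
    rw [this]
    push_cast
    field_simp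
  have hDval : D = r * G + ∑' n : ℕ, (n:ℝ) * (nbc r n * x ^ n) := by
    rw [hD, Summable.tsum_eq_zero_add S1]
    simp only [Nat.cast_zero, zero_mul, mul_zero, zero_add]
    calc (∑' n : ℕ, nbc r (n+1) * (((n+1:ℕ):ℝ) * x ^ (n + 1 - 1)))
        = ∑' n : ℕ, (r * (nbc r n * x ^ n) + (n:ℝ) * (nbc r n * x ^ n)) := by
          exact tsum_congr key
      _ = r * G + ∑' n : ℕ, (n:ℝ) * (nbc r n * x ^ n) := by
          rw [Summable.tsum_add (S0.mul_left r) Sd, tsum_mul_left]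
  have hxD : x * D = ∑' n : ℕ, (n:ℝ) * (nbc r n * x ^ n) := by
    rw [hD, ← tsum_mul_left]
    refine tsum_congr (fun n => ?_)
    cases n with
    | zero => simp
    | succ k =>
      have h : (k + 1 - 1) = k := by omega
      rw [h, pow_succ]
      push_cast
      ring
  have : (1 - x) * D = D - x * D := by ring
  rw [this, hxD, hDval]
  ring



lemma hasDerivAt_G {r : ℝ} (hr : 0 < r) {b x : ℝ} (hb0 : 0 < b) (hb1 : b < 1)
    (hx : x ∈ Set.Ioo (-b) b) :
    HasDerivAt (fun y : ℝ => ∑' n : ℕ, nbc r n * y ^ n)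
      (∑' n : ℕ, nbc r n * ((n:ℝ) * x ^ (n - 1))) x := by
  refine hasDerivAt_tsum_of_isPreconnected
    (u := fun n : ℕ => nbc r n * ((n:ℝ) * b ^ (n - 1))) (y₀ := 0)
    (summable_deriv_terms hr hb0.le hb1) isOpen_Ioo
    ((convex_Ioo _ _).isPreconnected)
    (fun n y _ => (hasDerivAt_pow n y).const_mul (nbc r n)) ?_ ?_ ?_ hx
  · intro n y hy
    have hyb : |y| ≤ b := by
      rw [abs_le]
      exact ⟨hy.1.le, hy.2.le⟩
    rw [Real.norm_eq_abs, abs_mul, abs_mul, Nat.abs_cast, abs_pow,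
      abs_of_nonneg (nbc_pos hr n).le]
    have : |y| ^ (n-1) ≤ b ^ (n-1) := pow_le_pow_left₀ (abs_nonneg y) hyb _
    have hn : (0:ℝ) ≤ n := Nat.cast_nonneg n
    exact mul_le_mul_of_nonneg_left (mul_le_mul_of_nonneg_left this hn) (nbc_pos hr n).le
  · exact ⟨by linarith, hb0⟩
  · apply summable_of_ne_finset_zero (s := {0})
    intro n hn
    simp only [Finset.mem_singleton] at hn
    rw [zero_pow hn, mul_zero]

lemma tsum_nbc {r : ℝ} (hr : 0 < r) {q : ℝ} (h0 : 0 ≤ q) (h1 : q < 1) :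
    ∑' n : ℕ, nbc r n * q ^ n = (1 - q) ^ (-r) := by
  set b := (1 + q) / 2 with hb
  have hb0 : 0 < b := by rw [hb]; linarith
  have hb1 : b < 1 := by rw [hb]; linarith
  have hqb : q < b := by rw [hb]; linarith
  set G := fun y : ℝ => ∑' n : ℕ, nbc r n * y ^ n with hGdef
  set F := fun y : ℝ => G y * (1 - y) ^ r with hFdef
  have hF : ∀ x ∈ Set.Icc (0:ℝ) q, HasDerivAt F 0 x := by
    intro x hx
    have hx0 : 0 ≤ x := hx.1
    have hxq : x ≤ q := hx.2
    have hx1 : x < 1 := lt_of_le_of_lt hxq h1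
    have hxb : x ∈ Set.Ioo (-b) b := ⟨by linarith, by linarith⟩
    have h1x : (0:ℝ) < 1 - x := by linarith
    have hGd := hasDerivAt_G hr hb0 hb1 hxb
    have hsub : HasDerivAt (fun y : ℝ => 1 - y) (-1) x := by
      simpa using (hasDerivAt_id x).const_sub 1
    have hpow0 : HasDerivAt (fun z : ℝ => z ^ r) (r * (1 - x) ^ (r - 1)) (1 - x) :=
      Real.hasDerivAt_rpow_const (Or.inl h1x.ne')
    have hpow : HasDerivAt (fun y : ℝ => (1 - y) ^ r) (r * (1 - x) ^ (r - 1) * (-1)) x :=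
      hpow0.comp x hsub
    have hprod := hGd.mul hpow
    have hzero :
        (∑' n : ℕ, nbc r n * ((n:ℝ) * x ^ (n - 1))) * (1 - x) ^ r
          + G x * (r * (1 - x) ^ (r - 1) * (-1)) = 0 := by
      have hiden := deriv_identity hr hx0 hx1
      have hsplit : (1 - x) ^ (r - 1) * (1 - x) = (1 - x) ^ r := by
        rw [Real.rpow_sub h1x, Real.rpow_one, div_mul_cancel₀ _ h1x.ne']
      rw [← hsplit]
      have : (∑' n : ℕ, nbc r n * ((n:ℝ) * x ^ (n - 1))) * ((1 - x) ^ (r - 1) * (1 - x))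
          = ((1 - x) * (∑' n : ℕ, nbc r n * ((n:ℝ) * x ^ (n - 1)))) * (1 - x) ^ (r - 1) := by
        ring
      rw [this, hiden]
      ring
    rw [hzero] at hprod
    exact hprod
  have hcont : ContinuousOn F (Set.Icc 0 q) :=
    fun x hx => ((hF x hx).continuousAt).continuousWithinAt
  have hderiv : ∀ x ∈ Set.Ico (0:ℝ) q, HasDerivWithinAt F 0 (Set.Ici x) x :=
    fun x hx => (hF x ⟨hx.1, hx.2.le⟩).hasDerivWithinAt
  have hconst := constant_of_has_deriv_right_zero hcont hderiv q ⟨h0, le_refl q⟩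
  have hG0 : G 0 = 1 := by
    show (∑' n : ℕ, nbc r n * (0:ℝ) ^ n) = 1
    rw [tsum_eq_single 0 (fun n hn => by rw [zero_pow hn, mul_zero])]
    simp [nbc_zero]
  have hF0 : F 0 = 1 := by
    rw [hFdef]
    simp only [sub_zero, Real.one_rpow, mul_one]
    exact hG0
  rw [hF0] at hconst
  have hpowpos : (0:ℝ) < (1 - q) ^ r := Real.rpow_pos_of_pos (by linarith) r
  have hGq : G q = ((1 - q) ^ r)⁻¹ := by
    have h' : G q * (1 - q) ^ r = 1 := hconst
    field_simp
    linarith [h']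
  rw [Real.rpow_neg (by linarith : (0:ℝ) ≤ 1 - q)]
  exact hGq



lemma pmf_eq (r p : ℝ) (k : ℕ) :
    negBinomPMF r p k = p ^ r * (nbc r k * (1 - p) ^ k) := by
  unfold negBinomPMF nbc
  ring

lemma pmf_nonneg {r p : ℝ} (hr : 0 < r) (hp0 : 0 < p) (hp1 : p ≤ 1) (k : ℕ) :
    0 ≤ negBinomPMF r p k := by
  rw [pmf_eq]
  have h1 : (0:ℝ) < p ^ r := Real.rpow_pos_of_pos hp0 r
  have h2 : (0:ℝ) ≤ 1 - p := by linarith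
  have h3 := nbc_pos hr k
  positivity

lemma pmf_pos {r p : ℝ} (hr : 0 < r) (hp0 : 0 < p) (hp1 : p < 1) (k : ℕ) :
    0 < negBinomPMF r p k := by
  rw [pmf_eq]
  have h1 : (0:ℝ) < p ^ r := Real.rpow_pos_of_pos hp0 r
  have h2 : (0:ℝ) < 1 - p := by linarith
  exact mul_pos h1 (mul_pos (nbc_pos hr k) (pow_pos h2 k))

lemma pmf_succ (r p : ℝ) (k : ℕ) :
    negBinomPMF r p (k + 1) = negBinomPMF r p k * ((r + k) / (k + 1) * (1 - p)) := by
  rw [pmf_eq, pmf_eq, nbc_succ, pow_succ]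
  ring

lemma summable_pmf {r p : ℝ} (hr : 0 < r) (hp0 : 0 < p) (hp1 : p ≤ 1) :
    Summable (negBinomPMF r p) := by
  have h0 : (0:ℝ) ≤ 1 - p := by linarith
  have h1 : 1 - p < 1 := by linarith
  refine Summable.congr ((summable_nbc_mul hr h0 h1).mul_left (p ^ r)) ?_
  intro n
  rw [pmf_eq]

lemma tsum_pmf {r p : ℝ} (hr : 0 < r) (hp0 : 0 < p) (hp1 : p ≤ 1) :
    ∑' k : ℕ, negBinomPMF r p k = 1 := by
  have h0 : (0:ℝ) ≤ 1 - p := by linarith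
  have h1 : 1 - p < 1 := by linarith
  calc ∑' k : ℕ, negBinomPMF r p k = ∑' k : ℕ, p ^ r * (nbc r k * (1 - p) ^ k) := by
        exact tsum_congr (fun k => pmf_eq r p k)
    _ = p ^ r * ∑' k : ℕ, nbc r k * (1 - p) ^ k := tsum_mul_left
    _ = p ^ r * (1 - (1 - p)) ^ (-r) := by rw [tsum_nbc hr h0 h1]
    _ = p ^ r * p ^ (-r) := by norm_num
    _ = 1 := by
        rw [← Real.rpow_add hp0]
        norm_num

/-- rewrite the `ite` tail sum as a shifted sum -/
lemma ite_tsum_eq (f : ℕ → ℝ) (k : ℕ) :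
    (∑' j : ℕ, if k ≤ j then f j else 0) = ∑' j : ℕ, f (j + k) := by
  have h1 : (fun j : ℕ => if k ≤ j then f j else 0) = Set.indicator (Set.Ici k) f := by
    funext j
    rw [Set.indicator_apply]
    simp [Set.mem_Ici]
  rw [h1, ← tsum_subtype (Set.Ici k) f]
  let e : ℕ ≃ (Set.Ici k) :=
    { toFun := fun n => ⟨n + k, Set.mem_Ici.2 (Nat.le_add_left k n)⟩
      invFun := fun j => j.1 - k
      left_inv := fun n => by simp
      right_inv := fun j => by
        rcases j with ⟨j, hj⟩
        simp only [Set.mem_Ici] at hj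
        simp [Nat.sub_add_cancel hj] }
  rw [← e.tsum_eq (fun j : (Set.Ici k) => f j.1)]
  exact tsum_congr fun n => rfl

lemma tail_eq {r p : ℝ} (hr : 0 < r) (hp0 : 0 < p) (hp1 : p ≤ 1) (k : ℕ) :
    (∑' j : ℕ, negBinomPMF r p (j + k))
      = 1 - ∑ j ∈ Finset.range k, negBinomPMF r p j := by
  have h := Summable.sum_add_tsum_nat_add (f := negBinomPMF r p) k (summable_pmf hr hp0 hp1)
  rw [tsum_pmf hr hp0 hp1] at h
  linarith


end NegBinomAux

open NegBinomAux

theorem negBinomial_stochastic_order_iff (r₁ r₂ p₁ p₂ : ℝ)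
    (hr₁ : 0 < r₁) (hr₂ : 0 < r₂)
    (h₁ : p₁ ∈ Set.Ioc (0:ℝ) 1) (h₂ : p₂ ∈ Set.Ioc (0:ℝ) 1) :
    (∀ k : ℕ, (∑' j : ℕ, if k ≤ j then negBinomPMF r₁ p₁ j else 0)
        ≤ ∑' j : ℕ, if k ≤ j then negBinomPMF r₂ p₂ j else 0)
      ↔ p₂ ≤ p₁ ∧ p₂ ^ r₂ ≤ p₁ ^ r₁ := by
  obtain ⟨hp₁0, hp₁1⟩ := h₁
  obtain ⟨hp₂0, hp₂1⟩ := h₂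
  have hpmf0 : ∀ r p : ℝ, negBinomPMF r p 0 = p ^ r := by
    intro r p; rw [pmf_eq, nbc_zero]; ring
  constructor
  · -- necessity
    intro H
    have H' : ∀ k : ℕ, (∑' j : ℕ, negBinomPMF r₁ p₁ (j + k))
        ≤ ∑' j : ℕ, negBinomPMF r₂ p₂ (j + k) := by
      intro k
      have h := H k
      rwa [ite_tsum_eq, ite_tsum_eq] at h
    have hpr : p₂ ^ r₂ ≤ p₁ ^ r₁ := by
      have h := H' 1
      rw [tail_eq hr₁ hp₁0 hp₁1, tail_eq hr₂ hp₂0 hp₂1] at h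
      simp only [Finset.sum_range_one, hpmf0] at h
      linarith
    refine ⟨?_, hpr⟩
    by_contra hc
    push_neg at hc
    -- hc : p₁ < p₂
    set q₁ := 1 - p₁ with hq₁def
    set q₂ := 1 - p₂ with hq₂def
    have hq₁pos : 0 < q₁ := by rw [hq₁def]; linarith
    have hq₁1 : q₁ < 1 := by rw [hq₁def]; linarith
    have hq₂0 : 0 ≤ q₂ := by rw [hq₂def]; linarith
    have hq₂1 : q₂ < 1 := by rw [hq₂def]; linarith
    have hq₂q₁ : q₂ < q₁ := by rw [hq₁def, hq₂def]; linarith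
    set x := q₂ / q₁ with hxdef
    have hx0 : 0 ≤ x := div_nonneg hq₂0 hq₁pos.le
    have hx1 : x < 1 := (div_lt_one hq₁pos).2 hq₂q₁
    set m := ⌈r₂⌉₊ with hmdef
    set S := ∑' i : ℕ, ((i:ℝ) + 1) ^ m * q₂ ^ i with hSdef
    have hSsum : Summable (fun i : ℕ => ((i:ℝ) + 1) ^ m * q₂ ^ i) :=
      summable_aux m hq₂0 hq₂1
    have hp₁r : (0:ℝ) < p₁ ^ r₁ := Real.rpow_pos_of_pos hp₁0 r₁
    have hp₂r : (0:ℝ) < p₂ ^ r₂ := Real.rpow_pos_of_pos hp₂0 r₂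
    have key : ∀ k : ℕ, 1 ≤ k →
        r₁ * p₁ ^ r₁ ≤ (p₂ ^ r₂ * S) * ((k:ℝ) * ((k:ℝ) + 1) ^ m * x ^ k) := by
      intro k hk
      have hkpos : (0:ℝ) < k := by exact_mod_cast hk
      have hA : r₁ / k * (p₁ ^ r₁ * q₁ ^ k) ≤ negBinomPMF r₁ p₁ k := by
        rw [pmf_eq]
        have h5 := nbc_ge hr₁ k hk
        calc r₁ / k * (p₁ ^ r₁ * q₁ ^ k) = p₁ ^ r₁ * (r₁ / k * q₁ ^ k) := by ring
          _ ≤ p₁ ^ r₁ * (nbc r₁ k * q₁ ^ k) := by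
              exact mul_le_mul_of_nonneg_left
                (mul_le_mul_of_nonneg_right h5 (by positivity)) hp₁r.le
      have hsum₁ : Summable (fun j : ℕ => negBinomPMF r₁ p₁ (j + k)) :=
        (summable_nat_add_iff k).2 (summable_pmf hr₁ hp₁0 hp₁1)
      have hsum₂ : Summable (fun j : ℕ => negBinomPMF r₂ p₂ (j + k)) :=
        (summable_nat_add_iff k).2 (summable_pmf hr₂ hp₂0 hp₂1)
      have hB : negBinomPMF r₁ p₁ k ≤ ∑' j : ℕ, negBinomPMF r₁ p₁ (j + k) := by
        have := Summable.le_tsum hsum₁ 0 (fun j _ => pmf_nonneg hr₁ hp₁0 hp₁1 (j + k))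
        rwa [zero_add] at this
      have hC := H' k
      have hterm : ∀ i : ℕ, negBinomPMF r₂ p₂ (i + k)
          ≤ (p₂ ^ r₂ * ((k:ℝ) + 1) ^ m * q₂ ^ k) * (((i:ℝ) + 1) ^ m * q₂ ^ i) := by
        intro i
        have h5 : nbc r₂ (i + k) ≤ ((i:ℝ) + 1) ^ m * ((k:ℝ) + 1) ^ m := by
          calc nbc r₂ (i + k) ≤ (((i + k : ℕ):ℝ) + 1) ^ m :=
                nbc_le_pow hr₂ (Nat.le_ceil r₂) (i + k)
            _ ≤ (((i:ℝ) + 1) * ((k:ℝ) + 1)) ^ m := by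
                apply pow_le_pow_left₀ (by positivity)
                push_cast
                nlinarith [Nat.cast_nonneg (α := ℝ) i, Nat.cast_nonneg (α := ℝ) k]
            _ = ((i:ℝ) + 1) ^ m * ((k:ℝ) + 1) ^ m := mul_pow _ _ _
        calc negBinomPMF r₂ p₂ (i + k)
            = p₂ ^ r₂ * (nbc r₂ (i + k) * (q₂ ^ i * q₂ ^ k)) := by
              rw [pmf_eq, pow_add]
          _ ≤ p₂ ^ r₂ * ((((i:ℝ) + 1) ^ m * ((k:ℝ) + 1) ^ m) * (q₂ ^ i * q₂ ^ k)) := by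
              exact mul_le_mul_of_nonneg_left
                (mul_le_mul_of_nonneg_right h5 (by positivity)) hp₂r.le
          _ = (p₂ ^ r₂ * ((k:ℝ) + 1) ^ m * q₂ ^ k) * (((i:ℝ) + 1) ^ m * q₂ ^ i) := by
              ring
      have hD : (∑' j : ℕ, negBinomPMF r₂ p₂ (j + k))
          ≤ (p₂ ^ r₂ * ((k:ℝ) + 1) ^ m * q₂ ^ k) * S := by
        calc (∑' j : ℕ, negBinomPMF r₂ p₂ (j + k))
            ≤ ∑' i : ℕ, (p₂ ^ r₂ * ((k:ℝ) + 1) ^ m * q₂ ^ k) * (((i:ℝ) + 1) ^ m * q₂ ^ i) :=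
              Summable.tsum_le_tsum hterm hsum₂ (hSsum.mul_left _)
          _ = (p₂ ^ r₂ * ((k:ℝ) + 1) ^ m * q₂ ^ k) * S := tsum_mul_left
      have hchain : r₁ / k * (p₁ ^ r₁ * q₁ ^ k)
          ≤ (p₂ ^ r₂ * ((k:ℝ) + 1) ^ m * q₂ ^ k) * S :=
        le_trans hA (le_trans hB (le_trans hC hD))
      have hq₁k : (0:ℝ) < q₁ ^ k := pow_pos hq₁pos k
      have hmul := mul_le_mul_of_nonneg_right hchain
        (le_of_lt (div_pos hkpos hq₁k))
      have eL : r₁ / k * (p₁ ^ r₁ * q₁ ^ k) * ((k:ℝ) / q₁ ^ k) = r₁ * p₁ ^ r₁ := by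
        field_simp
      have eR : (p₂ ^ r₂ * ((k:ℝ) + 1) ^ m * q₂ ^ k) * S * ((k:ℝ) / q₁ ^ k)
          = (p₂ ^ r₂ * S) * ((k:ℝ) * ((k:ℝ) + 1) ^ m * x ^ k) := by
        rw [hxdef, div_pow]
        field_simp
      rw [eL, eR] at hmul
      exact hmul
    -- limit argument
    have hsx : Summable (fun k : ℕ => (p₂ ^ r₂ * S) * ((k:ℝ) * ((k:ℝ) + 1) ^ m * x ^ k)) := by
      apply Summable.mul_left
      refine summable_of_le_aux (m + 1) hx0 hx1 1 ?_
      intro n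
      rw [one_mul, Real.norm_eq_abs, abs_mul, abs_mul, Nat.abs_cast, abs_pow, abs_pow,
        abs_of_nonneg (by positivity : (0:ℝ) ≤ (n:ℝ) + 1), abs_of_nonneg hx0, pow_succ]
      have hn : (n:ℝ) ≤ (n:ℝ) + 1 := by linarith
      calc (n:ℝ) * ((n:ℝ) + 1) ^ m * x ^ n ≤ ((n:ℝ) + 1) * ((n:ℝ) + 1) ^ m * x ^ n := by
            exact mul_le_mul_of_nonneg_right
              (mul_le_mul_of_nonneg_right hn (by positivity)) (by positivity)
        _ = ((n:ℝ) + 1) ^ m * ((n:ℝ) + 1) * x ^ n := by ring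
    have htend := hsx.tendsto_atTop_zero
    have hev := htend.eventually_lt_const (by positivity : (0:ℝ) < r₁ * p₁ ^ r₁)
    obtain ⟨k, hk⟩ := (hev.and (Filter.eventually_ge_atTop 1)).exists
    exact absurd (key k hk.2) (not_le.2 hk.1)
  · -- sufficiency
    rintro ⟨hp, hpr⟩ k
    rw [ite_tsum_eq, ite_tsum_eq]
    by_cases hP1 : p₁ = 1
    · subst hP1
      cases k with
      | zero =>
        simp only [Nat.add_zero]
        rw [tsum_pmf hr₁ hp₁0 le_rfl, tsum_pmf hr₂ hp₂0 hp₂1]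
      | succ n =>
        have hz : ∀ j : ℕ, negBinomPMF r₁ 1 (j + (n + 1)) = 0 := by
          intro j
          rw [pmf_eq]
          norm_num
        rw [tsum_congr hz, tsum_zero]
        exact tsum_nonneg (fun j => pmf_nonneg hr₂ hp₂0 hp₂1 _)
    · have hp₁lt : p₁ < 1 := lt_of_le_of_ne hp₁1 hP1
      have hp₂lt : p₂ < 1 := lt_of_le_of_lt hp hp₁lt
      set f₁ := negBinomPMF r₁ p₁ with hf₁def
      set f₂ := negBinomPMF r₂ p₂ with hf₂def
      have hf₁pos : ∀ j, 0 < f₁ j := fun j => pmf_pos hr₁ hp₁0 hp₁lt j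
      have hf₂pos : ∀ j, 0 < f₂ j := fun j => pmf_pos hr₂ hp₂0 hp₂lt j
      have hq₁pos : (0:ℝ) < 1 - p₁ := by linarith
      have hq₂pos : (0:ℝ) < 1 - p₂ := by linarith
      set g : ℕ → ℝ := fun i => f₂ i / f₁ i with hgdef
      have hgpos : ∀ i, 0 < g i := fun i => div_pos (hf₂pos i) (hf₁pos i)
      set ρ : ℕ → ℝ := fun i => ((r₂ + i) * (1 - p₂)) / ((r₁ + i) * (1 - p₁)) with hρdef
      have hρpos : ∀ i, 0 < ρ i := by
        intro i
        have h1 : (0:ℝ) < r₂ + i := by positivity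
        have h2 : (0:ℝ) < r₁ + i := by positivity
        exact div_pos (mul_pos h1 hq₂pos) (mul_pos h2 hq₁pos)
      have hgmul : ∀ i, g (i + 1) = g i * ρ i := by
        intro i
        show f₂ (i + 1) / f₁ (i + 1) = f₂ i / f₁ i * (((r₂ + i) * (1 - p₂)) / ((r₁ + i) * (1 - p₁)))
        rw [hf₁def, hf₂def, pmf_succ, pmf_succ]
        have h1 : (0:ℝ) < r₂ + i := by positivity
        have h2 : (0:ℝ) < r₁ + i := by positivity
        have h3 : negBinomPMF r₁ p₁ i ≠ 0 := (pmf_pos hr₁ hp₁0 hp₁lt i).ne'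
        have h4 : ((i:ℝ) + 1) ≠ 0 := by positivity
        field_simp
      have hg0 : g 0 ≤ 1 := by
        rw [hgdef]
        refine (div_le_one (hf₁pos 0)).2 ?_
        rw [hf₁def, hf₂def, hpmf0, hpmf0]
        exact hpr
      have Hup : ∀ j, f₁ j < f₂ j → ∀ k', j ≤ k' → f₁ k' < f₂ k' := by
        intro j hj
        have hgj : 1 < g j := (one_lt_div (hf₁pos j)).2 hj
        have main : ∀ k', j ≤ k' → 1 < g k' := by
          rcases le_total r₁ r₂ with hr12 | hr21
          · -- monotone case
            have hρ1 : ∀ i, 1 ≤ ρ i := by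
              intro i
              rw [hρdef]
              refine (one_le_div (mul_pos (by positivity : (0:ℝ) < r₁ + i) hq₁pos)).2 ?_
              have : (1:ℝ) - p₁ ≤ 1 - p₂ := by linarith
              apply mul_le_mul (by linarith) this hq₁pos.le (by positivity)
            intro k'
            refine Nat.le_induction hgj ?_ k'
            intro n _ ih
            rw [hgmul]
            calc (1:ℝ) < g n := ih
              _ = g n * 1 := (mul_one _).symm
              _ ≤ g n * ρ n := mul_le_mul_of_nonneg_left (hρ1 n) (hgpos n).le
          · -- convex case
            have hρmono : Monotone ρ := by
              apply monotone_nat_of_le_succ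
              intro i
              rw [hρdef]
              have h1 : (0:ℝ) < (r₁ + i) * (1 - p₁) := by positivity
              have h2 : (0:ℝ) < (r₁ + ((i:ℝ) + 1)) * (1 - p₁) := by positivity
              push_cast
              rw [div_le_div_iff₀ h1 h2]
              nlinarith [mul_nonneg (mul_nonneg hq₁pos.le hq₂pos.le)
                (sub_nonneg.2 hr21)]
            have hdec : ∀ jj, (∀ l, l < jj → ρ l ≤ 1) → g jj ≤ g 0 := by
              intro jj
              induction jj with
              | zero => intro _; exact le_rfl
              | succ n ih =>
                intro h
                rw [hgmul]
                calc g n * ρ n ≤ g n * 1 :=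
                      mul_le_mul_of_nonneg_left (h n (Nat.lt_succ_self n)) (hgpos n).le
                  _ = g n := mul_one _
                  _ ≤ g 0 := ih (fun l hl => h l (Nat.lt_succ_of_lt hl))
            have hex : ∃ l₀, l₀ < j ∧ 1 < ρ l₀ := by
              by_contra hno
              push_neg at hno
              have := hdec j (fun l hl => (hno l hl))
              linarith
            obtain ⟨l₀, hl₀j, hρl₀⟩ := hex
            intro k'
            refine Nat.le_induction hgj ?_ k'
            intro n hn ih
            rw [hgmul]
            have hρn : 1 < ρ n := lt_of_lt_of_le hρl₀ (hρmono (le_trans hl₀j.le hn))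
            calc (1:ℝ) = 1 * 1 := (mul_one 1).symm
              _ < g n * ρ n := mul_lt_mul'' ih hρn zero_le_one zero_le_one
        intro k' hk'
        exact (one_lt_div (hf₁pos k')).1 (main k' hk')
      by_cases hex : ∃ j, j < k ∧ f₁ j < f₂ j
      · obtain ⟨j₀, hj₀k, hj₀⟩ := hex
        have hsum₁ : Summable (fun j : ℕ => f₁ (j + k)) :=
          (summable_nat_add_iff k).2 (summable_pmf hr₁ hp₁0 hp₁1)
        have hsum₂ : Summable (fun j : ℕ => f₂ (j + k)) :=
          (summable_nat_add_iff k).2 (summable_pmf hr₂ hp₂0 hp₂1)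
        refine Summable.tsum_le_tsum (fun i => ?_) hsum₁ hsum₂
        exact (Hup j₀ hj₀ (i + k) (le_trans hj₀k.le (Nat.le_add_left k i))).le
      · push_neg at hex
        rw [hf₁def, hf₂def, tail_eq hr₁ hp₁0 hp₁1, tail_eq hr₂ hp₂0 hp₂1]
        have hsum : ∑ j ∈ Finset.range k, negBinomPMF r₂ p₂ j
            ≤ ∑ j ∈ Finset.range k, negBinomPMF r₁ p₁ j := by
          refine Finset.sum_le_sum (fun j hj => ?_)
          have := hex j (Finset.mem_range.1 hj)
          rw [hf₁def, hf₂def] at this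
          exact this
        linarith
end

section
/- For λ > 0, r > 0, and p ∈ (0,1), the Poisson distribution Poi_λ is stochastically smaller than the negative binomial distribution b⁻_{r,p} if and only if e^{-λ} ≥ p^r. -/
/-- The Poisson weight `Poi_λ({k}) = e^{-λ} λ^k / k!`. -/
noncomputable def poissonPMF (l : ℝ) (k : ℕ) : ℝ :=
  Real.exp (-l) * l ^ k / (Nat.factorial k)

open Finset in
noncomputable def abin (r : ℝ) (k : ℕ) : ℝ := ∏ l ∈ Finset.range k, (r + l) / (l + 1)

lemma abin_zero (r : ℝ) : abin r 0 = 1 := by simp [abin]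

lemma abin_succ (r : ℝ) (k : ℕ) : abin r (k + 1) = abin r k * ((r + k) / (k + 1)) := by
  simp only [abin, Finset.prod_range_succ]

lemma abin_pos {r : ℝ} (hr : 0 < r) (k : ℕ) : 0 < abin r k := by
  apply Finset.prod_pos
  intro i _
  positivity

lemma abin_le_choose {r : ℝ} (hr : 0 < r) (k : ℕ) :
    abin r k ≤ ((⌈r⌉₊ - 1 + k).choose k : ℝ) := by
  set m := ⌈r⌉₊ with hm
  have hm1 : 1 ≤ m := Nat.one_le_iff_ne_zero.mpr (by
    simp [hm, Nat.ceil_eq_zero, not_le, hr])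
  have hrm : r ≤ m := Nat.le_ceil r
  induction k with
  | zero => simp [abin_zero]
  | succ k ih =>
    rw [abin_succ]
    have hid : ((m - 1 + (k + 1)).choose (k + 1) : ℝ) * (k + 1) =
        (m + k) * ((m - 1 + k).choose k : ℝ) := by
      have hnat : (m + k).choose (k + 1) * (k + 1) = (m + k) * ((m - 1 + k).choose k) := by
        have := Nat.add_one_mul_choose_eq (m - 1 + k) k
        have h2 : m - 1 + k + 1 = m + k := by omega
        rw [h2] at this
        simpa using this.symm
      have h3 : m - 1 + (k + 1) = m + k := by omega
      rw [h3]
      exact_mod_cast hnat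
    have hstep : abin r k * ((r + k) / (k + 1)) ≤
        ((m - 1 + k).choose k : ℝ) * ((m + k) / (k + 1)) := by
      apply mul_le_mul ih _ (by positivity) (by positivity)
      apply div_le_div_of_nonneg_right ?_ (by positivity) |>.trans_eq rfl
      · linarith
    refine hstep.trans_eq ?_
    have hk1 : ((k : ℝ) + 1) ≠ 0 := by positivity
    field_simp at hid ⊢
    linarith [hid]

lemma abs_abin_pow_le {r : ℝ} (hr : 0 < r) (x : ℝ) (n : ℕ) :
    ‖abin r n * x ^ n‖ ≤ ((n + (⌈r⌉₊ - 1)).choose (⌈r⌉₊ - 1) : ℝ) * |x| ^ n := by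
  rw [norm_mul, Real.norm_eq_abs, Real.norm_eq_abs, abs_pow,
    abs_of_pos (abin_pos hr n)]
  apply mul_le_mul_of_nonneg_right _ (by positivity)
  have h := abin_le_choose hr n
  rwa [add_comm (⌈r⌉₊ - 1) n, Nat.choose_symm_add] at h

lemma summable_abin {r : ℝ} (hr : 0 < r) {x : ℝ} (hx : |x| < 1) :
    Summable fun n => abin r n * x ^ n := by
  have hx' : ‖|x|‖ < 1 := by rwa [Real.norm_eq_abs, abs_abs]
  exact Summable.of_norm_bounded
    (summable_choose_mul_geometric_of_norm_lt_one (⌈r⌉₊ - 1) hx')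
    (abs_abin_pow_le hr x)

lemma summable_n_abin {r : ℝ} (hr : 0 < r) {x : ℝ} (hx : |x| < 1) :
    Summable fun n : ℕ => (n : ℝ) * abin r n * x ^ n := by
  have hx' : ‖|x|‖ < 1 := by rwa [Real.norm_eq_abs, abs_abs]
  set m := ⌈r⌉₊ with hmdef
  have hm1 : 1 ≤ m := Nat.one_le_iff_ne_zero.mpr (by
    simp [hmdef, Nat.ceil_eq_zero, not_le, hr])
  apply Summable.of_norm_bounded
    ((summable_choose_mul_geometric_of_norm_lt_one m hx').mul_left (m : ℝ))
  intro n
  have hnat : n * ((m - 1 + n).choose n) ≤ m * ((n + m).choose m) := by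
    have h1 : (m - 1 + n).choose n = (m - 1 + n).choose (m - 1) := by
      rw [add_comm]; exact Nat.choose_symm_add
    have h2 := Nat.add_one_mul_choose_eq (m - 1 + n) (m - 1)
    have h3 : m - 1 + n + 1 = m + n := by omega
    have h4 : m - 1 + 1 = m := by omega
    rw [h3, h4] at h2
    calc n * ((m - 1 + n).choose n) = n * ((m - 1 + n).choose (m - 1)) := by rw [h1]
    _ ≤ (m + n) * ((m - 1 + n).choose (m - 1)) := by
        exact Nat.mul_le_mul_right _ (by omega)
    _ = (m + n).choose m * m := h2
    _ = m * ((n + m).choose m) := by rw [add_comm n m]; ring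
  rw [norm_mul, norm_mul, Real.norm_eq_abs, Real.norm_eq_abs, Real.norm_eq_abs,
    abs_pow, abs_of_pos (abin_pos hr n), Nat.abs_cast]
  calc (n : ℝ) * abin r n * |x| ^ n
      ≤ (n : ℝ) * ((m - 1 + n).choose n : ℝ) * |x| ^ n := by
        apply mul_le_mul_of_nonneg_right _ (by positivity)
        exact mul_le_mul_of_nonneg_left (abin_le_choose hr n) (by positivity)
    _ ≤ (m : ℝ) * ((n + m).choose m : ℝ) * |x| ^ n := by
        apply mul_le_mul_of_nonneg_right _ (by positivity)
        exact_mod_cast hnat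
    _ = (m : ℝ) * (((n + m).choose m : ℝ) * |x| ^ n) := by ring

lemma abin_succ_mul (r : ℝ) (k : ℕ) :
    ((k : ℝ) + 1) * abin r (k + 1) = (r + k) * abin r k := by
  rw [abin_succ]
  have h : ((k : ℝ) + 1) ≠ 0 := by positivity
  field_simp

lemma abin_tsum_eq {r : ℝ} (hr : 0 < r) {x : ℝ} (hx0 : 0 ≤ x) (hx1 : x < 1) :
    (∑' n, abin r n * x ^ n) = (1 - x) ^ (-r) := by
  set R := (1 + x) / 2 with hRdef
  have hxR : x < R := by rw [hRdef]; linarith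
  have hR1 : R < 1 := by rw [hRdef]; linarith
  have hR0 : 0 < R := by rw [hRdef]; linarith
  set s := Set.Ioo (-R) R with hsdef
  set g : ℕ → ℝ → ℝ := fun n y => abin r n * y ^ n with hgdef
  set g' : ℕ → ℝ → ℝ := fun n y =>
    match n with
    | 0 => 0
    | k + 1 => ((k : ℝ) + 1) * abin r (k + 1) * y ^ k with hg'def
  set u : ℕ → ℝ := fun n =>
    match n with
    | 0 => 0
    | k + 1 => ((k : ℝ) + 1) * abin r (k + 1) * R ^ k with hudef
  have hRabs : |R| < 1 := by rw [abs_of_pos hR0]; exact hR1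
  have hu : Summable u := by
    rw [← summable_nat_add_iff 1]
    have heq : (fun n => u (n + 1)) =
        fun k : ℕ => r * (abin r k * R ^ k) + (k : ℝ) * abin r k * R ^ k := by
      funext k
      show ((k : ℝ) + 1) * abin r (k + 1) * R ^ k = _
      rw [abin_succ_mul]
      ring
    rw [heq]
    exact ((summable_abin hr hRabs).mul_left r).add (summable_n_abin hr hRabs)
  have hg : ∀ n y, y ∈ s → HasDerivAt (g n) (g' n y) y := by
    intro n y _
    match n with
    | 0 =>
      show HasDerivAt (fun y => abin r 0 * y ^ 0) 0 y
      simp only [pow_zero, mul_one]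
      exact hasDerivAt_const y _
    | k + 1 =>
      show HasDerivAt (fun y => abin r (k + 1) * y ^ (k + 1))
        (((k : ℝ) + 1) * abin r (k + 1) * y ^ k) y
      have h : HasDerivAt (fun y => abin r (k + 1) * y ^ (k + 1)) _ y :=
        (hasDerivAt_pow (k + 1) y).const_mul (abin r (k + 1))
      convert h using 1
      push_cast
      ring_nf
  have hg' : ∀ n y, y ∈ s → ‖g' n y‖ ≤ u n := by
    intro n y hy
    match n with
    | 0 => show ‖(0:ℝ)‖ ≤ (0:ℝ); exact le_of_eq norm_zero
    | k + 1 =>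
      show ‖((k : ℝ) + 1) * abin r (k + 1) * y ^ k‖ ≤ ((k : ℝ) + 1) * abin r (k + 1) * R ^ k
      have hy' : -R < y ∧ y < R := hy
      have hyR : |y| ≤ R := by rw [abs_le]; constructor <;> linarith [hy'.1, hy'.2]
      rw [norm_mul, norm_mul, Real.norm_eq_abs, Real.norm_eq_abs, Real.norm_eq_abs, abs_pow,
        abs_of_pos (show (0:ℝ) < (k : ℝ) + 1 by positivity), abs_of_pos (abin_pos hr _)]
      exact mul_le_mul_of_nonneg_left (pow_le_pow_left₀ (abs_nonneg y) hyR k)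
        (mul_nonneg (by positivity) (abin_pos hr _).le)
  have h0s : (0 : ℝ) ∈ s := by
    constructor
    · simpa using hR0
    · exact hR0
  have hg0 : Summable fun n => g n 0 :=
    summable_abin hr (by norm_num : |(0:ℝ)| < 1)
  have hDeriv : ∀ y ∈ s, HasDerivAt (fun z => ∑' n, g n z) (∑' n, g' n y) y :=
    fun y hy => hasDerivAt_tsum_of_isPreconnected hu isOpen_Ioo
      (convex_Ioo _ _).isPreconnected hg hg' h0s hg0 hy
  have hDsum : ∀ y, y ∈ s → Summable fun n => g' n y :=
    fun y hy => Summable.of_norm_bounded hu fun n => hg' n y hy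
  have habs : ∀ y, y ∈ s → |y| < 1 := by
    intro y hy
    have hy' : -R < y ∧ y < R := hy
    rw [abs_lt]
    constructor <;> linarith [hy'.1, hy'.2]
  have key : ∀ y ∈ s, (1 - y) * (∑' n, g' n y) = r * ∑' n, g n y := by
    intro y hy
    have hya := habs y hy
    have A : Summable fun n => abin r n * y ^ n := summable_abin hr hya
    have B : Summable fun n : ℕ => (n : ℝ) * abin r n * y ^ n := summable_n_abin hr hya
    have hD1 : (∑' n, g' n y) = ∑' k : ℕ, ((k : ℝ) + 1) * abin r (k + 1) * y ^ k := by
      rw [Summable.tsum_eq_zero_add (hDsum y hy)]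
      show (0 : ℝ) + _ = _
      rw [zero_add]
    have hD2 : (∑' n, g' n y)
        = r * (∑' n, abin r n * y ^ n) + ∑' k : ℕ, (k : ℝ) * abin r k * y ^ k := by
      rw [hD1]
      have hshift : (fun k : ℕ => ((k : ℝ) + 1) * abin r (k + 1) * y ^ k)
          = fun k : ℕ => r * (abin r k * y ^ k) + (k : ℝ) * abin r k * y ^ k := by
        funext k; rw [abin_succ_mul]; ring
      rw [hshift, Summable.tsum_add (A.mul_left r) B, tsum_mul_left]
    have hyD : y * (∑' n, g' n y) = ∑' k : ℕ, (k : ℝ) * abin r k * y ^ k := by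
      rw [hD1, ← tsum_mul_left, Summable.tsum_eq_zero_add B]
      simp only [Nat.cast_zero, zero_mul, pow_zero, zero_add]
      apply tsum_congr
      intro k
      push_cast
      ring
    have hfg : (∑' n, g n y) = ∑' n, abin r n * y ^ n := rfl
    rw [hfg]
    linear_combination hD2 - hyD
  have hF : ∀ y ∈ s, HasDerivAt (fun z => (1 - z) ^ r * ∑' n, g n z) 0 y := by
    intro y hy
    have hy' : -R < y ∧ y < R := hy
    have h1y : (0 : ℝ) < 1 - y := by linarith [hy'.2]
    have hin : HasDerivAt (fun z : ℝ => 1 - z) (-1) y := by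
      simpa using (hasDerivAt_id y).const_sub 1
    have hout : HasDerivAt (fun w : ℝ => w ^ r) (r * (1 - y) ^ (r - 1)) (1 - y) :=
      Real.hasDerivAt_rpow_const (Or.inl h1y.ne')
    have hcomp : HasDerivAt (fun z : ℝ => (1 - z) ^ r) (r * (1 - y) ^ (r - 1) * (-1)) y :=
      hout.comp y hin
    have hmul := hcomp.mul (hDeriv y hy)
    have hsplit : (1 - y) ^ r = (1 - y) ^ (r - 1) * (1 - y) := by
      have h := Real.rpow_sub h1y r 1
      rw [Real.rpow_one] at h
      rw [h]
      field_simp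
    have hval : r * (1 - y) ^ (r - 1) * (-1) * (∑' n, g n y)
        + (1 - y) ^ r * (∑' n, g' n y) = 0 := by
      rw [hsplit]
      linear_combination (1 - y) ^ (r - 1) * (key y hy)
    rw [hval] at hmul
    exact hmul
  have hIccs : Set.Icc (0 : ℝ) x ⊆ s := by
    intro y hy
    constructor
    · linarith [hy.1]
    · linarith [hy.2]
  have hconst := constant_of_has_deriv_right_zero
    (f := fun z => (1 - z) ^ r * ∑' n, g n z) (a := 0) (b := x)
    (fun y hy => (hF y (hIccs hy)).continuousAt.continuousWithinAt)
    (fun y hy => (hF y (hIccs (Set.mem_Icc_of_Ico hy))).hasDerivWithinAt)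
    x ⟨hx0, le_refl x⟩
  change (1 - x) ^ r * ∑' n, g n x = (1 - 0) ^ r * ∑' n, g n 0 at hconst
  have hf0 : (∑' n, g n 0) = 1 := by
    rw [tsum_eq_single 0]
    · show abin r 0 * (0 : ℝ) ^ 0 = 1
      simp [abin_zero]
    · intro b hb
      show abin r b * (0 : ℝ) ^ b = 0
      rw [zero_pow hb, mul_zero]
  rw [hf0, sub_zero, Real.one_rpow, mul_one] at hconst
  have hfg : (∑' n, g n x) = ∑' n, abin r n * x ^ n := rfl
  rw [hfg] at hconst
  have hpos : (0 : ℝ) < (1 - x) ^ r := Real.rpow_pos_of_pos (by linarith) r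
  rw [Real.rpow_neg (by linarith : (0:ℝ) ≤ 1 - x), inv_eq_one_div,
    eq_div_iff hpos.ne']
  linarith [hconst]


lemma negBinom_eq (r p : ℝ) (k : ℕ) :
    negBinomPMF r p k = abin r k * (1 - p) ^ k * p ^ r := by
  unfold negBinomPMF abin
  ring

lemma negBinom_hasSum {r p : ℝ} (hr : 0 < r) (hp : p ∈ Set.Ioo (0:ℝ) 1) :
    HasSum (negBinomPMF r p) 1 := by
  have hx0 : (0:ℝ) ≤ 1 - p := by linarith [hp.2]
  have hx1 : 1 - p < 1 := by linarith [hp.1]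
  have habs : |1 - p| < 1 := by rwa [abs_of_nonneg hx0]
  have hsum : Summable fun k => abin r k * (1 - p) ^ k := summable_abin hr habs
  have h1 : Summable (negBinomPMF r p) := by
    apply (hsum.mul_right (p ^ r)).congr
    intro k
    rw [negBinom_eq]
  have htsum : ∑' k, negBinomPMF r p k = 1 := by
    calc ∑' k, negBinomPMF r p k = ∑' k, abin r k * (1 - p) ^ k * (p ^ r) :=
          tsum_congr fun k => negBinom_eq r p k
    _ = (∑' k, abin r k * (1 - p) ^ k) * p ^ r := tsum_mul_right
    _ = (1 - (1 - p)) ^ (-r) * p ^ r := by rw [abin_tsum_eq hr hx0 hx1]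
    _ = 1 := by
        have h2 : 1 - (1 - p) = p := by ring
        rw [h2, Real.rpow_neg hp.1.le, inv_mul_cancel₀ (Real.rpow_pos_of_pos hp.1 r).ne']
  exact htsum ▸ h1.hasSum

lemma poisson_hasSum {l : ℝ} (hl : 0 < l) : HasSum (poissonPMF l) 1 := by
  have h := ProbabilityTheory.poissonPMFRealSum ⟨l, hl.le⟩
  have heq : (fun n => ProbabilityTheory.poissonPMFReal ⟨l, hl.le⟩ n) = poissonPMF l := by
    funext n
    rfl
  exact h

lemma poisson_succ (l : ℝ) (k : ℕ) :
    poissonPMF l (k + 1) = poissonPMF l k * (l / (k + 1)) := by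
  unfold poissonPMF
  rw [Nat.factorial_succ]
  have h1 : ((k:ℝ) + 1) ≠ 0 := by positivity
  have h2 : ((Nat.factorial k : ℕ) : ℝ) ≠ 0 := Nat.cast_ne_zero.mpr (Nat.factorial_ne_zero k)
  push_cast
  field_simp
  ring

lemma negBinom_succ (r p : ℝ) (k : ℕ) :
    negBinomPMF r p (k + 1) = negBinomPMF r p k * ((r + k) / (k + 1) * (1 - p)) := by
  unfold negBinomPMF
  rw [Finset.prod_range_succ]
  ring

lemma poisson_pos {l : ℝ} (hl : 0 < l) (k : ℕ) : 0 < poissonPMF l k := by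
  unfold poissonPMF
  positivity

lemma negBinom_pos {r p : ℝ} (hr : 0 < r) (hp : p ∈ Set.Ioo (0:ℝ) 1) (k : ℕ) :
    0 < negBinomPMF r p k := by
  rw [negBinom_eq]
  exact mul_pos (mul_pos (abin_pos hr k) (pow_pos (by linarith [hp.2]) k))
    (Real.rpow_pos_of_pos hp.1 r)

lemma tail_eq (f : ℕ → ℝ) (k : ℕ) :
    (∑' j : ℕ, if k ≤ j then f j else 0) = ∑' i : ℕ, f (i + k) := by
  have hinj : Function.Injective (· + k : ℕ → ℕ) := add_left_injective k
  have hsupp : Function.support (fun j => if k ≤ j then f j else 0)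
      ⊆ Set.range (· + k : ℕ → ℕ) := by
    intro j hj
    rw [Function.mem_support] at hj
    by_cases h : k ≤ j
    · refine ⟨j - k, ?_⟩
      show j - k + k = j
      omega
    · simp [h] at hj
  rw [← hinj.tsum_eq hsupp]
  apply tsum_congr
  intro i
  simp [Nat.le_add_left]

theorem poisson_le_negBinomial_iff (l r p : ℝ)
    (hl : 0 < l) (hr : 0 < r) (hp : p ∈ Set.Ioo (0:ℝ) 1) :
    (∀ k : ℕ, (∑' j : ℕ, if k ≤ j then poissonPMF l j else 0)
        ≤ ∑' j : ℕ, if k ≤ j then negBinomPMF r p j else 0)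
      ↔ p ^ r ≤ Real.exp (-l) := by
  classical
  obtain ⟨hp0, hp1⟩ := hp
  have hP : HasSum (poissonPMF l) 1 := poisson_hasSum hl
  have hQ : HasSum (negBinomPMF r p) 1 := negBinom_hasSum hr ⟨hp0, hp1⟩
  have hPs : Summable (poissonPMF l) := hP.summable
  have hQs : Summable (negBinomPMF r p) := hQ.summable
  have hQ0 : negBinomPMF r p 0 = p ^ r := by unfold negBinomPMF; simp
  have hP0 : poissonPMF l 0 = Real.exp (-l) := by unfold poissonPMF; simp
  simp only [tail_eq]
  constructor
  · intro h
    have h1 := h 1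
    have eP := Summable.sum_add_tsum_nat_add 1 hPs
    have eQ := Summable.sum_add_tsum_nat_add 1 hQs
    rw [hP.tsum_eq, Finset.sum_range_one] at eP
    rw [hQ.tsum_eq, Finset.sum_range_one] at eQ
    rw [← hQ0, ← hP0]
    linarith
  · intro h0 k
    have hQP0 : negBinomPMF r p 0 ≤ poissonPMF l 0 := by rw [hQ0, hP0]; exact h0
    by_cases hc : ∀ j, negBinomPMF r p j ≤ poissonPMF l j
    · have hpartial : ∑ i ∈ Finset.range k, negBinomPMF r p i
          ≤ ∑ i ∈ Finset.range k, poissonPMF l i :=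
        Finset.sum_le_sum fun i _ => hc i
      have eP := Summable.sum_add_tsum_nat_add k hPs
      have eQ := Summable.sum_add_tsum_nat_add k hQs
      rw [hP.tsum_eq] at eP
      rw [hQ.tsum_eq] at eQ
      linarith
    · push_neg at hc
      set m := Nat.find hc with hmdef
      have hm : poissonPMF l m < negBinomPMF r p m := Nat.find_spec hc
      have hmin : ∀ j, j < m → negBinomPMF r p j ≤ poissonPMF l j := by
        intro j hj
        exact not_lt.mp (Nat.find_min hc hj)
      have hm0 : m ≠ 0 := by
        intro h
        rw [h] at hm
        exact absurd hm (not_lt.mpr hQP0)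
      obtain ⟨m', hm'⟩ : ∃ m', m = m' + 1 := ⟨m - 1, by omega⟩
      rw [hm'] at hm
      have hQle : negBinomPMF r p m' ≤ poissonPMF l m' := hmin m' (by omega)
      have hQpos := negBinom_pos hr ⟨hp0, hp1⟩ m'
      have hc1 : (0:ℝ) < (m' : ℝ) + 1 := by positivity
      have hlt : l < (r + m') * (1 - p) := by
        rw [poisson_succ, negBinom_succ] at hm
        have h2 := mul_lt_mul_of_pos_right hm hc1
        have e1 : poissonPMF l m' * (l / ((m':ℝ) + 1)) * ((m':ℝ) + 1)
            = poissonPMF l m' * l := by field_simp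
        have e2 : negBinomPMF r p m' * ((r + m') / ((m':ℝ) + 1) * (1 - p)) * ((m':ℝ) + 1)
            = negBinomPMF r p m' * ((r + m') * (1 - p)) := by field_simp
        rw [e1, e2] at h2
        have h4 : negBinomPMF r p m' * l ≤ poissonPMF l m' * l :=
          mul_le_mul_of_nonneg_right hQle hl.le
        exact lt_of_mul_lt_mul_left (by linarith) hQpos.le
      have mono : ∀ j, m' + 1 ≤ j → poissonPMF l j ≤ negBinomPMF r p j := by
        intro j hj
        induction j, hj using Nat.le_induction with
        | base => exact hm.le
        | succ j hj ih =>
          have hcast : (m' : ℝ) ≤ (j : ℝ) := Nat.cast_le.mpr (by omega)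
          have hcj : l ≤ (r + j) * (1 - p) := by
            refine hlt.le.trans ?_
            apply mul_le_mul_of_nonneg_right (by linarith) (by linarith)
          have h5 : poissonPMF l j * l ≤ negBinomPMF r p j * ((r + j) * (1 - p)) :=
            mul_le_mul ih hcj hl.le (negBinom_pos hr ⟨hp0, hp1⟩ j).le
          calc poissonPMF l (j + 1) = poissonPMF l j * l / ((j:ℝ) + 1) := by
                rw [poisson_succ]; ring
          _ ≤ negBinomPMF r p j * ((r + j) * (1 - p)) / ((j:ℝ) + 1) := by
                rw [div_eq_mul_inv, div_eq_mul_inv]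
                exact mul_le_mul_of_nonneg_right h5 (by positivity)
          _ = negBinomPMF r p (j + 1) := by rw [negBinom_succ]; ring
      rcases le_or_gt (m' + 1) k with hk | hk
      · exact Summable.tsum_le_tsum (fun i => mono (i + k) (le_trans hk (Nat.le_add_left k i)))
          ((summable_nat_add_iff k).2 hPs) ((summable_nat_add_iff k).2 hQs)
      · have hpartial : ∑ i ∈ Finset.range k, negBinomPMF r p i
            ≤ ∑ i ∈ Finset.range k, poissonPMF l i := by
          apply Finset.sum_le_sum
          intro i hi
          have : i < m := by
            rw [hm']
            have := Finset.mem_range.mp hi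
            omega
          exact hmin i this
        have eP := Summable.sum_add_tsum_nat_add k hPs
        have eQ := Summable.sum_add_tsum_nat_add k hQs
        rw [hP.tsum_eq] at eP
        rw [hQ.tsum_eq] at eQ
        linarith
end

section
/- For r > 0, p ∈ (0,1), and k ∈ ℕ, the derivative in p of the negative binomial lower tail satisfies (d/dp) b⁻_{r,p}({0,...,k-1}) = k · C(r+k-1,k) · (1-p)^{k-1} p^{r-1}. -/
/-- Derivative in `p` of the negative binomial lower tail:
`(d/dp) b⁻_{r,p}({0,…,k-1}) = k C(r+k-1,k) (1-p)^{k-1} p^{r-1}`. -/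
theorem negBinomial_cdf_deriv (r p : ℝ) (k : ℕ)
    (hr : 0 < r) (hp : p ∈ Set.Ioo (0:ℝ) 1) (hk : 1 ≤ k) :
    HasDerivAt (fun q : ℝ => ∑ j ∈ Finset.range k, negBinomPMF r q j)
      ((k : ℝ) * (∏ l ∈ Finset.range k, (r + l) / (l + 1)) *
        (1 - p) ^ (k - 1) * p ^ (r - 1)) p := by
  obtain ⟨hp0, hp1⟩ := hp
  set C : ℕ → ℝ := fun j => ∏ l ∈ Finset.range j, (r + l) / (l + 1) with hC
  set u : ℕ → ℝ := fun j => (j : ℝ) * C j * p ^ (r - 1) * (1 - p) ^ (j - 1) with hu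
  have hpr : p ^ (r - 1) * p = p ^ r := by
    rw [Real.rpow_sub hp0, Real.rpow_one]
    field_simp
  have key : ∀ j ∈ Finset.range k,
      HasDerivAt (fun q : ℝ => negBinomPMF r q j) (u (j + 1) - u j) p := by
    intro j _
    have h1 : HasDerivAt (fun q : ℝ => q ^ r) (r * p ^ (r - 1)) p := by
      simpa using Real.hasDerivAt_rpow_const (x := p) (p := r) (Or.inl hp0.ne')
    have h2 : HasDerivAt (fun q : ℝ => (1 - q) ^ j) (-((j : ℝ) * (1 - p) ^ (j - 1))) p := by
      have := (hasDerivAt_pow j (1 - p)).comp p ((hasDerivAt_const p (1:ℝ)).sub (hasDerivAt_id p))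
      simpa [mul_comm, Function.comp_def] using this
    have h3 := (h1.mul h2).const_mul (C j)
    have heq : C j * (r * p ^ (r - 1) * (1 - p) ^ j + p ^ r * -((j : ℝ) * (1 - p) ^ (j - 1)))
        = u (j + 1) - u j := by
      cases j with
      | zero => simp [hu, hC, Finset.prod_range_succ]
      | succ m =>
        have hCsucc : C (m + 2) = C (m + 1) * ((r + ((m:ℝ) + 1)) / ((m:ℝ) + 2)) := by
          simp only [hC, Finset.prod_range_succ]
          push_cast
          ring
        have h2ne : ((m : ℝ) + 2) ≠ 0 := by positivity
        simp only [hu, hCsucc, Nat.add_sub_cancel]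
        rw [← hpr]
        push_cast
        field_simp
        ring
    have : (fun q : ℝ => negBinomPMF r q j) = fun q : ℝ => C j * (q ^ r * (1 - q) ^ j) := by
      funext q; simp [negBinomPMF, hC, mul_assoc]
    rw [this]
    exact heq ▸ h3
  have hsum := HasDerivAt.fun_sum key
  have htel : ∑ j ∈ Finset.range k, (u (j + 1) - u j) = u k - u 0 := Finset.sum_range_sub u k
  have hu0 : u 0 = 0 := by simp [hu]
  have : u k - u 0 = (k : ℝ) * C k * (1 - p) ^ (k - 1) * p ^ (r - 1) := by
    rw [hu0]; simp [hu]; ring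
  rw [htel, this] at hsum
  exact hsum
end

section
/- Let balls be thrown independently and uniformly at random into n boxes, and let N_{n,t} denote the number of nonempty boxes after t throws. Then for each fixed t ∈ ℕ, the sequence (N_{n,t})_{n∈ℕ} is stochastically increasing in n: for m < n, P(N_{m,t} ≥ l) ≤ P(N_{n,t} ≥ l) for all l. -/
/-- `boxDist n t k` is the probability that after throwing `t` balls independently
and uniformly into `n` boxes, exactly `k` boxes are nonempty: the Markov chain on
`{0,…,n}` started at `0` with transitions `p_n(k,k) = k/n`, `p_n(k,k+1) = 1 - k/n`. -/
noncomputable def boxDist (n : ℕ) : ℕ → ℕ → ℝ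
  | 0, k => if k = 0 then 1 else 0
  | t + 1, k =>
      ((k : ℝ) / n) * boxDist n t k +
        (if k = 0 then 0 else (1 - ((k : ℝ) - 1) / n) * boxDist n t (k - 1))

lemma boxDist_zero (n k : ℕ) : boxDist n 0 k = if k = 0 then 1 else 0 := rfl

lemma boxDist_succ (n t k : ℕ) : boxDist n (t + 1) k =
    ((k : ℝ) / n) * boxDist n t k +
      (if k = 0 then 0 else (1 - ((k : ℝ) - 1) / n) * boxDist n t (k - 1)) := rfl

lemma boxDist_gt_t (n : ℕ) : ∀ t k, t < k → boxDist n t k = 0 := by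
  intro t
  induction t with
  | zero => intro k hk; rw [boxDist_zero]; simp [show k ≠ 0 by omega]
  | succ t ih =>
    intro k hk
    rw [boxDist_succ, ih k (by omega), ih (k - 1) (by omega)]
    have : k ≠ 0 := by omega
    simp [this]

lemma boxDist_gt_n (n : ℕ) (hn : 1 ≤ n) : ∀ t k, n < k → boxDist n t k = 0 := by
  intro t
  induction t with
  | zero => intro k hk; simp [boxDist_zero, show k ≠ 0 by omega]
  | succ t ih =>
    intro k hk
    rw [boxDist_succ, ih k hk]
    rcases Nat.lt_or_ge n (k - 1) with h | h
    · rw [ih (k - 1) h]; simp [show k ≠ 0 by omega]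
    · have hk1 : k - 1 = n := by omega
      have : ((k : ℝ) - 1) = (n : ℝ) := by
        have : ((k - 1 : ℕ) : ℝ) = (k : ℝ) - 1 := by
          push_cast [Nat.cast_sub (show 1 ≤ k by omega)]; ring
        rw [← this, hk1]
      rw [this]
      have hn0 : (n : ℝ) ≠ 0 := by positivity
      simp [show k ≠ 0 by omega, div_self hn0]

lemma boxDist_nonneg (n : ℕ) (hn : 1 ≤ n) : ∀ t k, 0 ≤ boxDist n t k := by
  intro t
  induction t with
  | zero => intro k; rw [boxDist_zero]; positivity
  | succ t ih =>
    intro k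
    rw [boxDist_succ]
    have h1 : 0 ≤ ((k : ℝ) / n) * boxDist n t k := by
      have := ih k; positivity
    rcases Nat.eq_zero_or_pos k with hk | hk
    · simp [hk]
    rcases Nat.lt_or_ge n (k - 1) with h | h
    · rw [boxDist_gt_n n hn t (k - 1) h]
      simp [show k ≠ 0 by omega, h1]
    · have hc : 0 ≤ 1 - ((k : ℝ) - 1) / n := by
        have hkn : (k : ℝ) - 1 ≤ n := by
          have : ((k - 1 : ℕ) : ℝ) ≤ (n : ℝ) := by exact_mod_cast h
          have hc2 : ((k - 1 : ℕ) : ℝ) = (k : ℝ) - 1 := by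
            push_cast [Nat.cast_sub (show 1 ≤ k by omega)]; ring
          linarith [hc2 ▸ this]
        have hn0 : (0 : ℝ) < n := by exact_mod_cast Nat.pos_of_ne_zero (by omega)
        have := div_le_one_of_le₀ hkn (le_of_lt hn0)
        linarith
      have := ih (k - 1)
      have h2 : 0 ≤ (1 - ((k : ℝ) - 1) / n) * boxDist n t (k - 1) := by positivity
      simp only [show k ≠ 0 by omega, if_neg, ite_false]
      linarith

/-- Finite tail sum. -/
noncomputable def S (n t l : ℕ) : ℝ :=
  ∑ k ∈ Finset.range (t + 2), if l ≤ k then boxDist n t k else 0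

lemma tsum_eq_S (n t l : ℕ) :
    (∑' k : ℕ, if l ≤ k then boxDist n t k else 0) = S n t l := by
  apply tsum_eq_sum
  intro k hk
  have hk2 : ¬ k < t + 2 := fun h => hk (Finset.mem_range.mpr h)
  rw [boxDist_gt_t n t k (by omega)]
  simp

lemma S_nonneg (n t l : ℕ) (hn : 1 ≤ n) : 0 ≤ S n t l := by
  apply Finset.sum_nonneg
  intro k _
  split
  · exact boxDist_nonneg n hn t k
  · exact le_refl 0

lemma S_mono_l (n t l : ℕ) (hn : 1 ≤ n) : S n t (l + 1) ≤ S n t l := by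
  apply Finset.sum_le_sum
  intro k _
  by_cases h : l + 1 ≤ k
  · simp [h, show l ≤ k by omega]
  · by_cases h2 : l ≤ k
    · simp [h, h2, boxDist_nonneg n hn t k]
    · simp [h, h2]

lemma S_zero_of_gt (n t l : ℕ) (hn : 1 ≤ n) (h : n < l) : S n t l = 0 := by
  apply Finset.sum_eq_zero
  intro k _
  by_cases hk : l ≤ k
  · simp [hk, boxDist_gt_n n hn t k (by omega)]
  · simp [hk]

lemma S_split (n t l : ℕ) (hl : 1 ≤ l) :
    S n t (l - 1) = boxDist n t (l - 1) + S n t l := by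
  have key : S n t (l - 1) - S n t l =
      ∑ k ∈ Finset.range (t + 2), if k = l - 1 then boxDist n t k else 0 := by
    rw [S, S, ← Finset.sum_sub_distrib]
    apply Finset.sum_congr rfl
    intro k _
    by_cases h1 : l ≤ k
    · simp [h1, show l - 1 ≤ k by omega, show k ≠ l - 1 by omega]
    · by_cases h2 : l - 1 ≤ k
      · simp [show k = l - 1 by omega, show ¬ l ≤ l - 1 by omega]
      · simp [h1, h2, show k ≠ l - 1 by omega]
  rw [Finset.sum_ite_eq' (Finset.range (t + 2)) (l - 1)] at key
  by_cases hmem : l - 1 ∈ Finset.range (t + 2)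
  · rw [if_pos hmem] at key; linarith
  · rw [if_neg hmem] at key
    have hlt : ¬ l - 1 < t + 2 := fun h => hmem (Finset.mem_range.mpr h)
    rw [boxDist_gt_t n t (l - 1) (by omega)]
    linarith

lemma S_succ_t (n t l : ℕ) :
    S n (t + 1) l = S n t l +
      (if l = 0 then 0 else (1 - ((l : ℝ) - 1) / n) * boxDist n t (l - 1)) := by
  have hfirst : S n (t + 1) l =
      ∑ i ∈ Finset.range (t + 2),
        (if l ≤ i + 1 then boxDist n (t + 1) (i + 1) else 0) := by
    rw [S, Finset.sum_range_succ']
    simp [boxDist_succ]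
  have hterm : ∀ i : ℕ, (if l ≤ i + 1 then boxDist n (t + 1) (i + 1) else 0) =
      (if l ≤ i + 1 then (((i : ℝ) + 1) / n) * boxDist n t (i + 1) else 0) +
      (if l - 1 ≤ i then (1 - (i : ℝ) / n) * boxDist n t i else 0) := by
    intro i
    have hcond : (l ≤ i + 1) ↔ (l - 1 ≤ i) := by omega
    rw [boxDist_succ]
    have h1 : ((i + 1 : ℕ) : ℝ) = (i : ℝ) + 1 := by push_cast; ring
    simp only [show i + 1 ≠ 0 by omega, if_neg, ite_false, Nat.add_sub_cancel, h1]
    by_cases h : l ≤ i + 1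
    · rw [if_pos h, if_pos h, if_pos (hcond.mp h)]; ring
    · rw [if_neg h, if_neg h, if_neg (fun hh => h (hcond.mpr hh))]; ring
  have hA : ∑ i ∈ Finset.range (t + 2),
      (if l ≤ i + 1 then (((i : ℝ) + 1) / n) * boxDist n t (i + 1) else 0) =
      ∑ k ∈ Finset.range (t + 2), (if l ≤ k then ((k : ℝ) / n) * boxDist n t k else 0) := by
    have : ∑ k ∈ Finset.range (t + 3),
        (if l ≤ k then ((k : ℝ) / n) * boxDist n t k else 0) =
        ∑ i ∈ Finset.range (t + 2),
          (if l ≤ i + 1 then (((i : ℝ) + 1) / n) * boxDist n t (i + 1) else 0) := by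
      rw [Finset.sum_range_succ']
      have h1 : ∀ i : ℕ, ((i + 1 : ℕ) : ℝ) = (i : ℝ) + 1 := by intro; push_cast; ring
      simp [h1]
    rw [← this, Finset.sum_range_succ, boxDist_gt_t n t (t + 2) (by omega)]
    simp
  rw [hfirst]
  simp only [hterm]
  rw [Finset.sum_add_distrib, hA, ← Finset.sum_add_distrib]
  have hextra : (if l = 0 then 0 else (1 - ((l : ℝ) - 1) / n) * boxDist n t (l - 1)) =
      ∑ k ∈ Finset.range (t + 2),
        if k = l - 1 ∧ l ≠ 0 then (1 - (k : ℝ) / n) * boxDist n t k else 0 := by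
    rcases Nat.eq_zero_or_pos l with hl | hl
    · simp [hl]
    · have hcast : ((l - 1 : ℕ) : ℝ) = (l : ℝ) - 1 := by
        push_cast [Nat.cast_sub hl]; ring
      have : ∀ k, (if k = l - 1 ∧ l ≠ 0 then (1 - (k : ℝ) / n) * boxDist n t k else 0) =
          (if k = l - 1 then (1 - ((l : ℝ) - 1) / n) * boxDist n t (l - 1) else 0) := by
        intro k
        by_cases hk : k = l - 1
        · simp [hk, show l ≠ 0 by omega, hcast]
        · simp [hk]
      simp only [this]
      rw [Finset.sum_ite_eq' (Finset.range (t + 2)) (l - 1)]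
      by_cases hmem : l - 1 ∈ Finset.range (t + 2)
      · rw [if_pos hmem, if_neg (show l ≠ 0 by omega)]
      · rw [if_neg hmem, if_neg (show l ≠ 0 by omega)]
        have hlt : ¬ l - 1 < t + 2 := fun h => hmem (Finset.mem_range.mpr h)
        rw [boxDist_gt_t n t (l - 1) (by omega)]
        ring
  rw [S, hextra, ← Finset.sum_add_distrib]
  apply Finset.sum_congr rfl
  intro k _
  by_cases h1 : l ≤ k
  · have h2 : l - 1 ≤ k := by omega
    have h3 : ¬(k = l - 1 ∧ l ≠ 0) := by omega
    simp only [if_pos h1, if_pos h2, if_neg h3]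
    ring
  · by_cases h2 : l - 1 ≤ k
    · have h3 : k = l - 1 ∧ l ≠ 0 := by omega
      simp only [if_neg h1, if_pos h2, if_pos h3]
    · have h3 : ¬(k = l - 1 ∧ l ≠ 0) := by omega
      simp only [if_neg h1, if_neg h2, if_neg h3]

lemma S_convex (n t l : ℕ) (hl : 1 ≤ l) :
    S n (t + 1) l = (1 - ((l : ℝ) - 1) / n) * S n t (l - 1) + (((l : ℝ) - 1) / n) * S n t l := by
  rw [S_succ_t, if_neg (show l ≠ 0 by omega), S_split n t l hl]
  ring

lemma S_mono_n (t : ℕ) (m n : ℕ) (hm : 1 ≤ m) (hmn : m < n) :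
    ∀ l : ℕ, S m t l ≤ S n t l := by
  induction t with
  | zero =>
    intro l
    have : ∀ q : ℕ, S q 0 l = if l = 0 then 1 else 0 := by
      intro q
      rw [S]
      rcases Nat.eq_zero_or_pos l with hl | hl
      · subst hl; simp [boxDist_zero]
      · rw [if_neg (show l ≠ 0 by omega)]
        apply Finset.sum_eq_zero
        intro k _
        by_cases hk : l ≤ k
        · simp [hk, boxDist_zero, show k ≠ 0 by omega]
        · simp [hk]
    rw [this m, this n]
  | succ t ih =>
    intro l
    rcases Nat.eq_zero_or_pos l with hl | hl
    · subst hl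
      rw [S_succ_t, S_succ_t]
      simpa using ih 0
    rcases Nat.lt_or_ge m l with hml | hml
    · rw [S_zero_of_gt m (t + 1) l hm hml]
      exact S_nonneg n (t + 1) l (by omega)
    · -- 1 ≤ l ≤ m < n
      rw [S_convex m t l hl, S_convex n t l hl]
      set A := S m t (l - 1)
      set B := S m t l
      set A' := S n t (l - 1)
      set B' := S n t l
      have hAA : A ≤ A' := ih (l - 1)
      have hBB : B ≤ B' := ih l
      have hBA' : B' ≤ A' := by
        have := S_mono_l n t (l - 1) (by omega)
        simpa [show l - 1 + 1 = l by omega] using this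
      set p := ((l : ℝ) - 1) / n
      set q := ((l : ℝ) - 1) / m
      have hl1 : (0 : ℝ) ≤ (l : ℝ) - 1 := by
        have : (1 : ℝ) ≤ (l : ℝ) := by exact_mod_cast hl
        linarith
      have hn0 : (0 : ℝ) < n := by exact_mod_cast Nat.pos_of_ne_zero (by omega)
      have hm0 : (0 : ℝ) < m := by exact_mod_cast Nat.pos_of_ne_zero (by omega)
      have hp0 : 0 ≤ p := by positivity
      have hq0 : 0 ≤ q := by positivity
      have hpq : p ≤ q := by
        apply div_le_div_of_nonneg_left hl1 hm0
        exact_mod_cast le_of_lt hmn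
      have hq1 : q ≤ 1 := by
        rw [div_le_one hm0]
        have : (l : ℝ) ≤ (m : ℝ) := by exact_mod_cast hml
        linarith
      have hp1 : p ≤ 1 := le_trans hpq hq1
      nlinarith [mul_nonneg (by linarith : (0:ℝ) ≤ q - p) (by linarith : (0:ℝ) ≤ A' - B'),
        mul_le_mul_of_nonneg_left hAA (by linarith : (0:ℝ) ≤ 1 - q),
        mul_le_mul_of_nonneg_left hBB hq0]

/-- The number of nonempty boxes is stochastically increasing in the number of boxes. -/
theorem nonempty_boxes_stochastically_increasing (t m n : ℕ)
    (hm : 1 ≤ m) (hmn : m < n) :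
    ∀ l : ℕ, (∑' k : ℕ, if l ≤ k then boxDist m t k else 0)
      ≤ ∑' k : ℕ, if l ≤ k then boxDist n t k else 0 := by
  intro l
  rw [tsum_eq_S, tsum_eq_S]
  exact S_mono_n t m n hm hmn l
end
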